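/- arXiv:1512.04349 — 4 statements merged into one kernel-verified Lean document; each statement's English description precedes it below -/
import Mathlib

section
/- If f, g : [0,1] → ℝ are continuous and both nondecreasing, then d_F(f, g) = max(|f(0) − g(0)|, |f(1) − g(1)|). -/
open Set

/-- A valid reparametrization of `[0,1]`: a continuous strictly increasing
bijection of `[0,1]` onto itself fixing the endpoints. -/
def IsReparam (f : ℝ → ℝ) : Prop :=
  ContinuousOn f (Set.Icc 0 1) ∧ StrictMonoOn f (Set.Icc 0 1) ∧ f 0 = 0 ∧ f 1 = 1

/-- The Fréchet distance between two curves `τ, π : [0,1] → ℝ`: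
`inf_f sup_{t ∈ [0,1]} |τ(f(t)) - π(t)|` over reparametrizations `f`. -/
noncomputable def frechetDist (τ π : ℝ → ℝ) : ℝ :=
  ⨅ f : {f : ℝ → ℝ // IsReparam f}, ⨆ t : Set.Icc (0:ℝ) 1, |τ (f.1 ↑t) - π ↑t|

/-- `τ` is the polygonal curve on `[0,1]` with the `m` vertices `w 0, …, w (m-1)`
attained at parameters `t 0 = 0 < t 1 < … < t (m-1) = 1`, obtained by linear
interpolation. -/
def IsPolyOn (τ : ℝ → ℝ) (m : ℕ) (t w : ℕ → ℝ) : Prop :=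
  2 ≤ m ∧ t 0 = 0 ∧ t (m - 1) = 1 ∧ (∀ i, i + 1 < m → t i < t (i + 1)) ∧
  (∀ i, i + 1 < m → ∀ u ∈ Set.Icc (t i) (t (i + 1)),
    τ u = w i + (u - t i) / (t (i + 1) - t i) * (w (i + 1) - w i))

/-- `τ` is a polygonal curve (with finitely many vertices). -/
def IsPolyCurve (τ : ℝ → ℝ) : Prop := ∃ m t w, IsPolyOn τ m t w

/-- `c` is a polygonal curve with at most `ℓ` vertices, i.e. an element of `Δ_ℓ`. -/
def InDeltaL (ℓ : ℕ) (c : ℝ → ℝ) : Prop := ∃ m t w, m ≤ ℓ ∧ IsPolyOn c m t w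

/-- General position of the vertex sequence `w 0, …, w (m-1)`: pairwise distinct
vertex values, pairwise distinct differences, and no vertex inside the closed
interval spanned by its two neighbours. -/
def GenPos (m : ℕ) (w : ℕ → ℝ) : Prop :=
  (∀ i j, i < m → j < m → i ≠ j → w i ≠ w j) ∧
  (∀ i j p q, i < m → j < m → p < m → q < m → i ≠ j → p ≠ q →
      (i, j) ≠ (p, q) → w i - w j ≠ w p - w q) ∧
  (∀ i, i + 2 < m → w (i + 1) ∉ Set.uIcc (w i) (w (i + 2)))

/-- The parameters `s 0 = 0 < s 1 < … < s (ℓ-1) = 1` define a `δ`-signature of the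
curve `τ` (Definition 3.3 of the paper, `0`-indexed): non-degeneracy,
direction-preservation, minimum edge length and range conditions. -/
def IsSignature (δ : ℝ) (τ : ℝ → ℝ) (ℓ : ℕ) (s : ℕ → ℝ) : Prop :=
  2 ≤ ℓ ∧ s 0 = 0 ∧ s (ℓ - 1) = 1 ∧ (∀ i, i + 1 < ℓ → s i < s (i + 1)) ∧
  (∀ i, 1 ≤ i → i + 1 < ℓ → τ (s i) ∉ Set.uIcc (τ (s (i - 1))) (τ (s (i + 1)))) ∧
  (∀ i, i + 1 < ℓ → ∀ a b : ℝ, s i ≤ a → a < b → b ≤ s (i + 1) →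
      (τ (s i) < τ (s (i + 1)) → τ a - τ b ≤ 2 * δ) ∧
      (τ (s (i + 1)) < τ (s i) → τ b - τ a ≤ 2 * δ)) ∧
  (∀ i, 1 ≤ i → i + 3 ≤ ℓ → 2 * δ < |τ (s (i + 1)) - τ (s i)|) ∧
  δ < |τ (s 1) - τ (s 0)| ∧ δ < |τ (s (ℓ - 1)) - τ (s (ℓ - 2))| ∧
  (∀ i, 1 ≤ i → i + 3 ≤ ℓ → ∀ a ∈ Set.Icc (s i) (s (i + 1)),
      τ a ∈ Set.uIcc (τ (s i)) (τ (s (i + 1)))) ∧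
  (2 < ℓ → ∀ a ∈ Set.Icc (s 0) (s 1),
      τ a ∈ Set.uIcc (τ (s 0)) (τ (s 1)) ∪ Set.Icc (τ (s 0) - δ) (τ (s 0) + δ)) ∧
  (2 < ℓ → ∀ a ∈ Set.Icc (s (ℓ - 2)) (s (ℓ - 1)),
      τ a ∈ Set.uIcc (τ (s (ℓ - 2))) (τ (s (ℓ - 1))) ∪
        Set.Icc (τ (s (ℓ - 1)) - δ) (τ (s (ℓ - 1)) + δ)) ∧
  (ℓ = 2 → ∀ a ∈ Set.Icc (s 0) (s 1),
      τ a ∈ Set.uIcc (τ (s 0)) (τ (s 1)) ∪ Set.Icc (τ (s 0) - δ) (τ (s 0) + δ) ∪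
        Set.Icc (τ (s 1) - δ) (τ (s 1) + δ))

lemma isReparam_id : IsReparam id :=
  ⟨continuousOn_id, fun _ _ _ _ h => h, rfl, rfl⟩

lemma exists_good_reparam (f g : ℝ → ℝ)
    (hf : ContinuousOn f (Set.Icc 0 1)) (hg : ContinuousOn g (Set.Icc 0 1))
    (hfm : MonotoneOn f (Set.Icc 0 1)) (hgm : MonotoneOn g (Set.Icc 0 1))
    {ε : ℝ} (hε : 0 < ε) :
    ∃ ψ : ℝ → ℝ, IsReparam ψ ∧ ∀ t ∈ Set.Icc (0:ℝ) 1,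
      |f (ψ t) - g t| ≤ max |f 0 - g 0| |f 1 - g 1| + 3 * ε := by
  have h01 : (0:ℝ) ∈ Icc (0:ℝ) 1 := by norm_num
  have h11 : (1:ℝ) ∈ Icc (0:ℝ) 1 := by norm_num
  set M := max |f 0 - g 0| |f 1 - g 1| with hM
  set F : ℝ → ℝ := fun s => f s + ε * s with hFdef
  have hFc : ContinuousOn F (Icc 0 1) :=
    hf.add ((continuous_const.mul continuous_id).continuousOn)
  have hFm : StrictMonoOn F (Icc 0 1) := by
    intro a ha b hb hab
    have h1 := hfm ha hb hab.le
    have h2 := (mul_lt_mul_iff_right₀ hε).2 hab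
    simp only [hFdef]
    linarith
  have hF01 : F 0 ≤ F 1 := (hFm h01 h11 one_pos).le
  set M' := M + ε with hM'
  have hA : |F 0 - g 0| ≤ M' := by
    have hF0 : F 0 = f 0 := by simp [hFdef]
    rw [hF0]
    have : |f 0 - g 0| ≤ M := le_max_left _ _
    linarith
  have hB : |F 1 - g 1| ≤ M' := by
    have hF1 : F 1 = f 1 + ε := by simp [hFdef]
    rw [hF1]
    have h1 : f 1 + ε - g 1 = (f 1 - g 1) + ε := by ring
    have h2 : |f 1 - g 1| ≤ M := le_max_right _ _
    rw [h1]
    calc |(f 1 - g 1) + ε| ≤ |f 1 - g 1| + |ε| := abs_add_le _ _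
      _ ≤ M + ε := by rw [abs_of_pos hε]; linarith
  have hA1 : F 0 - g 0 ≤ M' := (abs_le.1 hA).2
  have hA2 : -M' ≤ F 0 - g 0 := (abs_le.1 hA).1
  have hB1 : F 1 - g 1 ≤ M' := (abs_le.1 hB).2
  have hB2 : -M' ≤ F 1 - g 1 := (abs_le.1 hB).1
  set h : ℝ → ℝ := fun t => max (max (F 0) (min (F 1) (g t - M')))
      (min (F t) (max (F 0) (min (F 1) (g t + M')))) with hhdef
  -- bounds
  have hbounds : ∀ t ∈ Icc (0:ℝ) 1,
      g t - M' ≤ h t ∧ h t ≤ g t + M' ∧ F 0 ≤ h t ∧ h t ≤ F 1 := by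
    intro t ht
    have hg0t : g 0 ≤ g t := hgm h01 ht ht.1
    have hgt1 : g t ≤ g 1 := hgm ht h11 ht.2
    have hlo : g t - M' ≤ F 1 := by linarith
    have hhi : F 0 ≤ g t + M' := by linarith
    simp only [hhdef]
    refine ⟨?_, ?_, ?_, ?_⟩
    · have e : min (F 1) (g t - M') = g t - M' := min_eq_right hlo
      calc g t - M' = min (F 1) (g t - M') := e.symm
        _ ≤ max (F 0) (min (F 1) (g t - M')) := le_max_right _ _
        _ ≤ _ := le_max_left _ _
    · have hc2 : max (F 0) (min (F 1) (g t + M')) ≤ g t + M' :=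
        max_le hhi (min_le_right _ _)
      have hc1 : max (F 0) (min (F 1) (g t - M')) ≤ g t + M' :=
        max_le hhi ((min_le_right _ _).trans (by linarith))
      exact max_le hc1 ((min_le_right _ _).trans hc2)
    · exact (le_max_left _ _).trans (le_max_left _ _)
    · have hc1 : max (F 0) (min (F 1) (g t - M')) ≤ F 1 := max_le hF01 (min_le_left _ _)
      have hc2 : max (F 0) (min (F 1) (g t + M')) ≤ F 1 := max_le hF01 (min_le_left _ _)
      exact max_le hc1 ((min_le_right _ _).trans hc2)
  have h0eq : h 0 = F 0 := by
    simp only [hhdef]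
    have e1 : min (F 1) (g 0 - M') = g 0 - M' := min_eq_right (by linarith)
    have e2 : max (F 0) (g 0 - M') = F 0 := max_eq_left (by linarith)
    have e3 : F 0 ≤ max (F 0) (min (F 1) (g 0 + M')) := le_max_left _ _
    rw [e1, e2, min_eq_left e3, max_self]
  have h1eq : h 1 = F 1 := by
    simp only [hhdef]
    have e1 : min (F 1) (g 1 + M') = F 1 := min_eq_left (by linarith)
    have e2 : max (F 0) (F 1) = F 1 := max_eq_right hF01
    have e3 : max (F 0) (min (F 1) (g 1 - M')) ≤ F 1 := max_le hF01 (min_le_left _ _)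
    rw [e1, e2, min_self, max_eq_right e3]
  have hhm : MonotoneOn h (Icc 0 1) := by
    intro a ha b hb hab
    have hg' : g a ≤ g b := hgm ha hb hab
    have hF' : F a ≤ F b := hFm.monotoneOn ha hb hab
    simp only [hhdef]
    exact max_le_max (max_le_max le_rfl (min_le_min le_rfl (by linarith)))
      (min_le_min hF' (max_le_max le_rfl (min_le_min le_rfl (by linarith))))
  have hhc : ContinuousOn h (Icc 0 1) := by
    simp only [hhdef]
    exact (continuousOn_const.sup (continuousOn_const.inf (hg.sub continuousOn_const))).sup
      (hFc.inf (continuousOn_const.sup (continuousOn_const.inf (hg.add continuousOn_const))))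
  have hivt : Icc (F 0) (F 1) ⊆ F '' Icc 0 1 := intermediate_value_Icc zero_le_one hFc
  have hex : ∀ t : ℝ, ∃ s : ℝ, t ∈ Icc (0:ℝ) 1 → s ∈ Icc (0:ℝ) 1 ∧ F s = h t := by
    intro t
    by_cases ht : t ∈ Icc (0:ℝ) 1
    · obtain ⟨s, hs, hFs⟩ := hivt ⟨(hbounds t ht).2.2.1, (hbounds t ht).2.2.2⟩
      exact ⟨s, fun _ => ⟨hs, hFs⟩⟩
    · exact ⟨0, fun c => absurd c ht⟩
  choose φ hφ using hex
  have hφmem : ∀ t ∈ Icc (0:ℝ) 1, φ t ∈ Icc (0:ℝ) 1 := fun t ht => (hφ t ht).1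
  have hφF : ∀ t ∈ Icc (0:ℝ) 1, F (φ t) = h t := fun t ht => (hφ t ht).2
  have hφm : MonotoneOn φ (Icc 0 1) := by
    intro a ha b hb hab
    have hle : F (φ a) ≤ F (φ b) := by
      rw [hφF a ha, hφF b hb]; exact hhm ha hb hab
    exact (hFm.le_iff_le (hφmem a ha) (hφmem b hb)).1 hle
  have hφ0 : φ 0 = 0 :=
    hFm.injOn (hφmem 0 h01) h01 (by rw [hφF 0 h01, h0eq])
  have hφ1 : φ 1 = 1 :=
    hFm.injOn (hφmem 1 h11) h11 (by rw [hφF 1 h11, h1eq])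
  have hφsurj : ∀ s ∈ Icc (0:ℝ) 1, ∃ t ∈ Icc (0:ℝ) 1, φ t = s := by
    intro s hs
    have hFs : F s ∈ Icc (F 0) (F 1) :=
      ⟨hFm.monotoneOn h01 hs hs.1, hFm.monotoneOn hs h11 hs.2⟩
    have himg : F s ∈ h '' Icc (0:ℝ) 1 := by
      have hsub := intermediate_value_Icc zero_le_one hhc
      rw [h0eq, h1eq] at hsub
      exact hsub hFs
    obtain ⟨t, ht, hts⟩ := himg
    exact ⟨t, ht, hFm.injOn (hφmem t ht) hs (by rw [hφF t ht, hts])⟩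
  -- continuity of φ on [0,1] via a monotone surjective extension
  set Φ : ℝ → ℝ := fun t => φ (max 0 (min 1 t)) + max (t - 1) 0 + min t 0 with hΦdef
  have hclamp : ∀ t : ℝ, max 0 (min 1 t) ∈ Icc (0:ℝ) 1 :=
    fun t => ⟨le_max_left _ _, max_le zero_le_one (min_le_left _ _)⟩
  have hΦm : Monotone Φ := by
    intro a b hab
    simp only [hΦdef]
    have h1 : max 0 (min 1 a) ≤ max 0 (min 1 b) :=
      max_le_max le_rfl (min_le_min le_rfl hab)
    have h2 := hφm (hclamp a) (hclamp b) h1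
    have h3 : max (a - 1) 0 ≤ max (b - 1) 0 := max_le_max (by linarith) le_rfl
    have h4 : min a 0 ≤ min b 0 := min_le_min hab le_rfl
    linarith
  have hΦeq : ∀ t ∈ Icc (0:ℝ) 1, Φ t = φ t := by
    intro t ht
    simp only [hΦdef]
    rw [min_eq_right ht.2, max_eq_right ht.1,
      max_eq_right (by linarith [ht.2] : t - 1 ≤ 0), min_eq_right ht.1]
    ring
  have hΦsurj : Function.Surjective Φ := by
    intro y
    rcases le_or_gt y 0 with hy | hy
    · refine ⟨y, ?_⟩
      simp only [hΦdef]
      rw [min_eq_right (by linarith : y ≤ 1), max_eq_left hy, hφ0,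
        max_eq_right (by linarith : y - 1 ≤ 0), min_eq_left hy]
      ring
    · rcases le_or_gt 1 y with hy1 | hy1
      · refine ⟨y, ?_⟩
        simp only [hΦdef]
        rw [min_eq_left hy1, max_eq_right zero_le_one, hφ1,
          max_eq_left (by linarith : 0 ≤ y - 1), min_eq_right (by linarith : 0 ≤ y)]
        ring
      · obtain ⟨t, ht, hts⟩ := hφsurj y ⟨hy.le, hy1.le⟩
        exact ⟨t, (hΦeq t ht).trans hts⟩
  have hΦc : Continuous Φ := hΦm.continuous_of_surjective hΦsurj
  have hφc : ContinuousOn φ (Icc 0 1) :=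
    hΦc.continuousOn.congr fun t ht => (hΦeq t ht).symm
  -- uniform continuity of f
  have huc := isCompact_Icc.uniformContinuousOn_of_continuous hf
  rw [Metric.uniformContinuousOn_iff] at huc
  obtain ⟨δ, hδpos, hδ⟩ := huc ε hε
  set d := min (δ / 2) (1 / 2) with hddef
  have hd0 : 0 < d := lt_min (by linarith) (by norm_num)
  have hd1 : d ≤ 1 / 2 := min_le_right _ _
  have hdδ : d < δ := (min_le_left _ _).trans_lt (by linarith)
  set ψ : ℝ → ℝ := fun t => (1 - d) * φ t + d * t with hψdef
  refine ⟨ψ, ⟨?_, ?_, ?_, ?_⟩, ?_⟩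
  · simp only [hψdef]
    exact (continuousOn_const.mul hφc).add (continuousOn_const.mul continuousOn_id)
  · intro a ha b hb hab
    have hmono := hφm ha hb hab.le
    have e1 : (1 - d) * φ a ≤ (1 - d) * φ b :=
      mul_le_mul_of_nonneg_left hmono (by linarith)
    have e2 : d * a < d * b := (mul_lt_mul_iff_right₀ hd0).2 hab
    simp only [hψdef]
    linarith
  · simp only [hψdef]
    rw [hφ0]; ring
  · simp only [hψdef]
    rw [hφ1]; ring
  · intro t ht
    have hφt := hφmem t ht
    have hψt : ψ t ∈ Icc (0:ℝ) 1 := by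
      have e1 : 0 ≤ (1 - d) * φ t := mul_nonneg (by linarith) hφt.1
      have e2 : 0 ≤ d * t := mul_nonneg hd0.le ht.1
      have e3 : (1 - d) * φ t ≤ (1 - d) * 1 := mul_le_mul_of_nonneg_left hφt.2 (by linarith)
      have e4 : d * t ≤ d * 1 := mul_le_mul_of_nonneg_left ht.2 hd0.le
      constructor <;> simp only [hψdef] <;> linarith
    have hdist : |ψ t - φ t| < δ := by
      have he : ψ t - φ t = d * (t - φ t) := by simp only [hψdef]; ring
      have habs : |t - φ t| ≤ 1 :=
        abs_le.2 ⟨by linarith [ht.1, hφt.2], by linarith [ht.2, hφt.1]⟩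
      rw [he, abs_mul, abs_of_pos hd0]
      have := mul_le_mul_of_nonneg_left habs hd0.le
      linarith
    have h1 : |f (ψ t) - f (φ t)| < ε := by
      have := hδ (ψ t) hψt (φ t) hφt (by simpa [Real.dist_eq] using hdist)
      simpa [Real.dist_eq] using this
    have h2 : |F (φ t) - g t| ≤ M' := by
      rw [hφF t ht]
      exact abs_le.2 ⟨by linarith [(hbounds t ht).1], by linarith [(hbounds t ht).2.1]⟩
    have h3 : |f (φ t) - g t| ≤ M' + ε := by
      have hFφ : F (φ t) = f (φ t) + ε * φ t := by simp [hFdef]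
      rw [hFφ] at h2
      have h2' := abs_le.1 h2
      have e1 : 0 ≤ ε * φ t := mul_nonneg hε.le hφt.1
      have e2 : ε * φ t ≤ ε * 1 := mul_le_mul_of_nonneg_left hφt.2 hε.le
      exact abs_le.2 ⟨by linarith [h2'.1], by linarith [h2'.2]⟩
    calc |f (ψ t) - g t| ≤ |f (ψ t) - f (φ t)| + |f (φ t) - g t| := abs_sub_le _ _ _
      _ ≤ ε + (M' + ε) := by linarith
      _ = M + 3 * ε := by rw [hM']; ring

/-- for continuous nondecreasing `f, g : [0,1] → ℝ`, the Fréchet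
distance equals `max (|f 0 - g 0|) (|f 1 - g 1|)`. -/
theorem frechet_dist_monotone (f g : ℝ → ℝ)
    (hf : ContinuousOn f (Set.Icc 0 1)) (hg : ContinuousOn g (Set.Icc 0 1))
    (hfm : MonotoneOn f (Set.Icc 0 1)) (hgm : MonotoneOn g (Set.Icc 0 1)) :
    frechetDist f g = max |f 0 - g 0| |f 1 - g 1| := by
  haveI hne : Nonempty {φ : ℝ → ℝ // IsReparam φ} := ⟨⟨id, isReparam_id⟩⟩
  haveI : Nonempty (Icc (0:ℝ) 1) := ⟨⟨0, by norm_num⟩⟩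
  have h01 : (0:ℝ) ∈ Icc (0:ℝ) 1 := by norm_num
  have h11 : (1:ℝ) ∈ Icc (0:ℝ) 1 := by norm_num
  set M := max |f 0 - g 0| |f 1 - g 1| with hM
  have hsup : ∀ φ : {φ : ℝ → ℝ // IsReparam φ},
      M ≤ ⨆ t : Icc (0:ℝ) 1, |f (φ.1 ↑t) - g ↑t| := by
    intro φ
    obtain ⟨hc, hm, hφ0, hφ1⟩ := φ.2
    have hmaps : Set.MapsTo φ.1 (Icc 0 1) (Icc 0 1) := by
      intro t ht
      constructor
      · have := hm.monotoneOn h01 ht ht.1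
        rwa [hφ0] at this
      · have := hm.monotoneOn ht h11 ht.2
        rwa [hφ1] at this
    have hcont : ContinuousOn (fun t => |f (φ.1 t) - g t|) (Icc 0 1) :=
      ((hf.comp hc hmaps).sub hg).abs
    have hbdd : BddAbove (Set.range fun t : Icc (0:ℝ) 1 => |f (φ.1 ↑t) - g ↑t|) := by
      rw [← Set.image_eq_range (fun t => |f (φ.1 t) - g t|) (Icc 0 1)]
      exact (isCompact_Icc.image_of_continuousOn hcont).bddAbove
    have l0 : |f 0 - g 0| ≤ ⨆ t : Icc (0:ℝ) 1, |f (φ.1 ↑t) - g ↑t| := by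
      have := le_ciSup hbdd (⟨0, h01⟩ : Icc (0:ℝ) 1)
      simpa [hφ0] using this
    have l1 : |f 1 - g 1| ≤ ⨆ t : Icc (0:ℝ) 1, |f (φ.1 ↑t) - g ↑t| := by
      have := le_ciSup hbdd (⟨1, h11⟩ : Icc (0:ℝ) 1)
      simpa [hφ1] using this
    exact max_le l0 l1
  apply le_antisymm
  · refine le_of_forall_pos_le_add fun ε hε => ?_
    obtain ⟨ψ, hψrep, hψbd⟩ := exists_good_reparam f g hf hg hfm hgm
      (show (0:ℝ) < ε / 3 by linarith)
    have hlow : frechetDist f g ≤ ⨆ t : Icc (0:ℝ) 1, |f (ψ ↑t) - g ↑t| := by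
      apply ciInf_le _ (⟨ψ, hψrep⟩ : {φ : ℝ → ℝ // IsReparam φ})
      refine ⟨0, ?_⟩
      rintro x ⟨φ, rfl⟩
      exact le_trans (le_trans (abs_nonneg _) (le_max_left _ _)) (hsup φ)
    have hup : (⨆ t : Icc (0:ℝ) 1, |f (ψ ↑t) - g ↑t|) ≤ M + ε := by
      apply ciSup_le
      intro t
      have := hψbd ↑t t.2
      linarith
    exact hlow.trans hup
  · exact le_ciInf hsup
end

section
/- For any δ ≥ 0, any curve τ : [0,1] → ℝ, and any δ-signature σ of τ, it holds that d_F(σ, τ) ≤ δ. -/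
open Set

lemma contOn_union_closed {f : ℝ → ℝ} {A B : Set ℝ} (hA : IsClosed A) (hB : IsClosed B)
    (h1 : ContinuousOn f A) (h2 : ContinuousOn f B) : ContinuousOn f (A ∪ B) := by
  intro x hx
  rcases hx with hx | hx
  · by_cases hxB : x ∈ B
    · exact (h1 x hx).union (h2 x hxB)
    · have : ContinuousWithinAt f B x :=
        continuousWithinAt_of_notMem_closure (by rwa [hB.closure_eq])
      exact (h1 x hx).union this
  · by_cases hxA : x ∈ A
    · exact (h1 x hxA).union (h2 x hx)
    · have : ContinuousWithinAt f A x :=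
        continuousWithinAt_of_notMem_closure (by rwa [hA.closure_eq])
      exact this.union (h2 x hx)

section runsup
variable {g : ℝ → ℝ} {p q : ℝ}

lemma runSup_cont (hg : ContinuousOn g (Icc p q)) :
    ContinuousOn (fun t => sSup (g '' Icc p t)) (Icc p q) ∧
    MonotoneOn (fun t => sSup (g '' Icc p t)) (Icc p q) := by
  have hbdd : ∀ t ∈ Icc p q, BddAbove (g '' Icc p t) := by
    intro t ht
    exact (isCompact_Icc.image_of_continuousOn
      (hg.mono (Icc_subset_Icc le_rfl ht.2))).bddAbove
  have hne : ∀ t ∈ Icc p q, (g '' Icc p t).Nonempty :=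
    fun t ht => (nonempty_Icc.2 ht.1).image g
  have hmono : MonotoneOn (fun t => sSup (g '' Icc p t)) (Icc p q) := by
    intro a ha b hb hab
    exact csSup_le_csSup (hbdd b hb) (hne a ha)
      (image_mono (f := g) (Icc_subset_Icc le_rfl hab))
  refine ⟨?_, hmono⟩
  have hUC := isCompact_Icc.uniformContinuousOn_of_continuous hg
  rw [Metric.uniformContinuousOn_iff] at hUC
  intro t0 ht0
  rw [Metric.continuousWithinAt_iff]
  intro ε hε
  obtain ⟨η, hη, hmod⟩ := hUC (ε/2) (by linarith)
  refine ⟨η, hη, fun t ht hdist => ?_⟩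
  have key : ∀ a b : ℝ, a ∈ Icc p q → b ∈ Icc p q → a ≤ b → dist a b < η →
      sSup (g '' Icc p b) ≤ sSup (g '' Icc p a) + ε/2 := by
    intro a b ha hb hab hd
    apply csSup_le (hne b hb)
    rintro y ⟨u, hu, rfl⟩
    by_cases hua : u ≤ a
    · have : g u ≤ sSup (g '' Icc p a) := le_csSup (hbdd a ha) ⟨u, ⟨hu.1, hua⟩, rfl⟩
      linarith
    · push_neg at hua
      have huq : u ∈ Icc p q := ⟨hu.1, le_trans hu.2 hb.2⟩
      have : dist u a < η := by
        rw [Real.dist_eq, abs_of_nonneg (by linarith)]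
        rw [Real.dist_eq] at hd
        have := abs_le.1 hd.le
        have h2 : u ≤ b := hu.2
        have : u - a ≤ b - a := by linarith
        have hba : b - a < η := by
          have := abs_lt.1 hd
          linarith [this.2]
        linarith
      have := hmod u huq a ha this
      have hga : g a ≤ sSup (g '' Icc p a) := le_csSup (hbdd a ha) ⟨a, ⟨ha.1, le_rfl⟩, rfl⟩
      have := abs_lt.1 (by rwa [Real.dist_eq] at this)
      linarith [this.1, this.2]
  rw [Real.dist_eq]
  rcases le_total t t0 with h | h
  · have h1 : sSup (g '' Icc p t) ≤ sSup (g '' Icc p t0) := hmono ht ht0 h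
    have h2 := key t t0 ht ht0 h hdist
    rw [abs_lt]; constructor <;> linarith
  · have h1 : sSup (g '' Icc p t0) ≤ sSup (g '' Icc p t) := hmono ht0 ht h
    have h2 := key t0 t ht0 ht h (by rwa [dist_comm])
    rw [abs_lt]; constructor <;> linarith

end runsup

lemma runInf_cont {g : ℝ → ℝ} {p q : ℝ} (hg : ContinuousOn g (Icc p q)) :
    ContinuousOn (fun t => sInf (g '' Icc t q)) (Icc p q) ∧
    MonotoneOn (fun t => sInf (g '' Icc t q)) (Icc p q) := by
  have hbdd : ∀ t ∈ Icc p q, BddBelow (g '' Icc t q) := by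
    intro t ht
    exact (isCompact_Icc.image_of_continuousOn
      (hg.mono (Icc_subset_Icc ht.1 le_rfl))).bddBelow
  have hne : ∀ t ∈ Icc p q, (g '' Icc t q).Nonempty :=
    fun t ht => (nonempty_Icc.2 ht.2).image g
  have hmono : MonotoneOn (fun t => sInf (g '' Icc t q)) (Icc p q) := by
    intro a ha b hb hab
    exact csInf_le_csInf (hbdd a ha) (hne b hb)
      (image_mono (f := g) (Icc_subset_Icc hab le_rfl))
  refine ⟨?_, hmono⟩
  have hUC := isCompact_Icc.uniformContinuousOn_of_continuous hg
  rw [Metric.uniformContinuousOn_iff] at hUC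
  intro t0 ht0
  rw [Metric.continuousWithinAt_iff]
  intro ε hε
  obtain ⟨η, hη, hmod⟩ := hUC (ε/2) (by linarith)
  refine ⟨η, hη, fun t ht hdist => ?_⟩
  have key : ∀ a b : ℝ, a ∈ Icc p q → b ∈ Icc p q → a ≤ b → dist a b < η →
      sInf (g '' Icc b q) - ε/2 ≤ sInf (g '' Icc a q) := by
    intro a b ha hb hab hd
    apply le_csInf (hne a ha)
    rintro y ⟨u, hu, rfl⟩
    by_cases hub : b ≤ u
    · have : sInf (g '' Icc b q) ≤ g u := csInf_le (hbdd b hb) ⟨u, ⟨hub, hu.2⟩, rfl⟩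
      linarith
    · push_neg at hub
      have hup : u ∈ Icc p q := ⟨le_trans ha.1 hu.1, hu.2⟩
      have hd2 : dist u b < η := by
        rw [Real.dist_eq, abs_of_nonpos (by linarith)]
        rw [Real.dist_eq] at hd
        have := abs_lt.1 hd
        linarith [hu.1, this.1]
      have h1 := hmod u hup b hb hd2
      have h2 : sInf (g '' Icc b q) ≤ g b := csInf_le (hbdd b hb) ⟨b, ⟨le_rfl, hb.2⟩, rfl⟩
      have := abs_lt.1 (by rwa [Real.dist_eq] at h1)
      linarith [this.1, this.2]
  rw [Real.dist_eq]
  rcases le_total t t0 with h | h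
  · have h1 : sInf (g '' Icc t q) ≤ sInf (g '' Icc t0 q) := hmono ht ht0 h
    have h2 := key t t0 ht ht0 h hdist
    rw [abs_lt]; constructor <;> linarith
  · have h1 : sInf (g '' Icc t0 q) ≤ sInf (g '' Icc t q) := hmono ht0 ht h
    have h2 := key t0 t ht0 ht h (by rwa [dist_comm])
    rw [abs_lt]; constructor <;> linarith

lemma contOn_min {f g : ℝ → ℝ} {s : Set ℝ} (hf : ContinuousOn f s) (hg : ContinuousOn g s) :
    ContinuousOn (fun x => min (f x) (g x)) s :=
  fun x hx => Filter.Tendsto.min (hf x hx) (hg x hx)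

lemma contOn_max {f g : ℝ → ℝ} {s : Set ℝ} (hf : ContinuousOn f s) (hg : ContinuousOn g s) :
    ContinuousOn (fun x => max (f x) (g x)) s :=
  fun x hx => Filter.Tendsto.max (hf x hx) (hg x hx)

lemma pieceInc {δ : ℝ} (hδ : 0 ≤ δ) {g : ℝ → ℝ} {p q A B : ℝ} (hpq : p < q)
    (hg : ContinuousOn g (Icc p q)) (hgp : g p = A) (hgq : g q = B) (hAB : A ≤ B)
    (hC1 : ∀ t ∈ Icc p q, A - δ ≤ g t) (hC2 : ∀ t ∈ Icc p q, g t ≤ B + δ)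
    (hC3 : ∀ a ∈ Icc p q, ∀ b ∈ Icc p q, a ≤ b → g a - g b ≤ 2*δ) :
    ∃ V : ℝ → ℝ, ContinuousOn V (Icc p q) ∧ MonotoneOn V (Icc p q) ∧ V p = A ∧ V q = B ∧
      ∀ t ∈ Icc p q, A ≤ V t ∧ V t ≤ B ∧ |V t - g t| ≤ δ := by
  obtain ⟨hMc, hMm⟩ := runSup_cont hg
  obtain ⟨hNc, hNm⟩ := runInf_cont hg
  set M : ℝ → ℝ := fun t => sSup (g '' Icc p t) with hM
  set N : ℝ → ℝ := fun t => sInf (g '' Icc t q) with hN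
  set W : ℝ → ℝ := fun t => A + (t - p) * ((B - A) / (q - p)) with hW
  have hpq' : (0:ℝ) < q - p := by linarith
  have hslope : (0:ℝ) ≤ (B - A) / (q - p) := div_nonneg (by linarith) hpq'.le
  have hbddA : ∀ t ∈ Icc p q, BddAbove (g '' Icc p t) := fun t ht =>
    (isCompact_Icc.image_of_continuousOn (hg.mono (Icc_subset_Icc le_rfl ht.2))).bddAbove
  have hbddB : ∀ t ∈ Icc p q, BddBelow (g '' Icc t q) := fun t ht =>
    (isCompact_Icc.image_of_continuousOn (hg.mono (Icc_subset_Icc ht.1 le_rfl))).bddBelow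
  have hneA : ∀ t ∈ Icc p q, (g '' Icc p t).Nonempty := fun t ht => (nonempty_Icc.2 ht.1).image g
  have hneB : ∀ t ∈ Icc p q, (g '' Icc t q).Nonempty := fun t ht => (nonempty_Icc.2 ht.2).image g
  have hpmem : p ∈ Icc p q := ⟨le_rfl, hpq.le⟩
  have hqmem : q ∈ Icc p q := ⟨hpq.le, le_rfl⟩
  have hMp : M p = A := by
    simp only [hM, Icc_self, image_singleton, csSup_singleton, hgp]
  have hNq : N q = B := by
    simp only [hN, Icc_self, image_singleton, csInf_singleton, hgq]
  have hgleM : ∀ t ∈ Icc p q, g t ≤ M t := fun t ht =>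
    le_csSup (hbddA t ht) ⟨t, ⟨ht.1, le_rfl⟩, rfl⟩
  have hMle : ∀ t ∈ Icc p q, M t ≤ g t + 2*δ := by
    intro t ht
    apply csSup_le (hneA t ht)
    rintro y ⟨u, hu, rfl⟩
    have := hC3 u ⟨hu.1, hu.2.trans ht.2⟩ t ht hu.2
    linarith
  have hNleg : ∀ t ∈ Icc p q, N t ≤ g t := fun t ht =>
    csInf_le (hbddB t ht) ⟨t, ⟨le_rfl, ht.2⟩, rfl⟩
  have hgleN : ∀ t ∈ Icc p q, g t - 2*δ ≤ N t := by
    intro t ht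
    apply le_csInf (hneB t ht)
    rintro y ⟨u, hu, rfl⟩
    have := hC3 t ht u ⟨ht.1.trans hu.1, hu.2⟩ hu.1
    linarith
  have hNA : ∀ t ∈ Icc p q, A - δ ≤ N t := by
    intro t ht
    apply le_csInf (hneB t ht)
    rintro y ⟨u, hu, rfl⟩
    exact hC1 u ⟨ht.1.trans hu.1, hu.2⟩
  have hWA : ∀ t ∈ Icc p q, A ≤ W t := by
    intro t ht
    have : (0:ℝ) ≤ (t - p) * ((B - A) / (q - p)) :=
      mul_nonneg (by linarith [ht.1]) hslope
    simp only [hW]; linarith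
  have hWc : ContinuousOn W (Icc p q) :=
    (continuous_const.add ((continuous_id.sub continuous_const).mul continuous_const)).continuousOn
  have hWm : MonotoneOn W (Icc p q) := by
    intro a _ b _ hab
    simp only [hW]
    have := mul_le_mul_of_nonneg_right (by linarith : a - p ≤ b - p) hslope
    linarith
  have hWp : W p = A := by simp [hW]
  have hWq : W q = B := by
    simp only [hW]
    field_simp
    ring
  set V : ℝ → ℝ := fun t => min (min B (N t + δ)) (max (M t - δ) (W t)) with hV
  have hVt : ∀ t, V t = min (min B (N t + δ)) (max (M t - δ) (W t)) := fun t => rfl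
  refine ⟨V, ?_, ?_, ?_, ?_, ?_⟩
  · exact contOn_min (contOn_min continuousOn_const (hNc.add continuousOn_const))
      (contOn_max (hMc.sub continuousOn_const) hWc)
  · intro a ha b hb hab
    rw [hVt a, hVt b]
    exact min_le_min (min_le_min le_rfl (by linarith [hNm ha hb hab]))
      (max_le_max (by linarith [hMm ha hb hab]) (hWm ha hb hab))
  · rw [hVt p, hMp, hWp]
    have h1 : max (A - δ) A = A := max_eq_right (by linarith)
    rw [h1]
    exact min_eq_right (le_min hAB (by linarith [hNA p hpmem]))
  · rw [hVt q, hNq, hWq]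
    have h1 : min B (B + δ) = B := min_eq_left (by linarith)
    rw [h1]
    exact min_eq_left (le_max_right _ _)
  · intro t ht
    have h1 := hgleM t ht; have h2 := hMle t ht; have h3 := hNleg t ht
    have h4 := hgleN t ht; have h5 := hNA t ht; have h6 := hWA t ht
    have h7 := hC1 t ht; have h8 := hC2 t ht
    rw [hVt t]
    refine ⟨le_min (le_min hAB (by linarith)) (le_trans h6 (le_max_right _ _)), ?_, ?_⟩
    · exact le_trans (min_le_left _ _) (min_le_left _ _)
    · have hub : min (min B (N t + δ)) (max (M t - δ) (W t)) ≤ N t + δ :=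
        le_trans (min_le_left _ _) (min_le_right _ _)
      have hlb : g t - δ ≤ min (min B (N t + δ)) (max (M t - δ) (W t)) :=
        le_min (le_min (by linarith) (by linarith))
          (le_trans (by linarith : g t - δ ≤ M t - δ) (le_max_left _ _))
      rw [abs_le]
      constructor
      · linarith
      · linarith


lemma pieceR {δ : ℝ} (hδ : 0 ≤ δ) {g : ℝ → ℝ} {p q A B : ℝ} (hpq : p < q)
    (hg : ContinuousOn g (Icc p q)) (hgp : g p = A) (hgq : g q = B) (hAB : A ≠ B)
    (hr1 : ∀ t ∈ Icc p q, min A B - δ ≤ g t) (hr2 : ∀ t ∈ Icc p q, g t ≤ max A B + δ)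
    (hdir : ∀ a ∈ Icc p q, ∀ b ∈ Icc p q, a ≤ b →
      (A < B → g a - g b ≤ 2*δ) ∧ (B < A → g b - g a ≤ 2*δ)) :
    ∃ R : ℝ → ℝ, ContinuousOn R (Icc p q) ∧ MonotoneOn R (Icc p q) ∧ R p = 0 ∧ R q = 1 ∧
      ∀ t ∈ Icc p q, R t ∈ Icc (0:ℝ) 1 ∧ |(A + R t * (B - A)) - g t| ≤ δ := by
  rcases hAB.lt_or_gt with hlt | hlt
  · have hmin : min A B = A := min_eq_left hlt.le
    have hmax : max A B = B := max_eq_right hlt.le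
    obtain ⟨V, hVc, hVm, hVp, hVq, hVpt⟩ := pieceInc hδ hpq hg hgp hgq hlt.le
      (fun t ht => by have := hr1 t ht; rwa [hmin] at this)
      (fun t ht => by have := hr2 t ht; rwa [hmax] at this)
      (fun a ha b hb hab => (hdir a ha b hb hab).1 hlt)
    have hBA : (0:ℝ) < B - A := by linarith
    refine ⟨fun t => (V t - A) / (B - A), (hVc.sub continuousOn_const).div_const _,
      ?_, ?_, ?_, ?_⟩
    · intro a ha b hb hab
      have h := hVm ha hb hab
      show (V a - A) / (B - A) ≤ (V b - A) / (B - A)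
      exact (div_le_div_iff_of_pos_right hBA).mpr (by linarith)
    · show (V p - A) / (B - A) = 0
      rw [hVp]; simp
    · show (V q - A) / (B - A) = 1
      rw [hVq]; field_simp
    · intro t ht
      obtain ⟨h1, h2, h3⟩ := hVpt t ht
      constructor
      · constructor
        · exact div_nonneg (by linarith) hBA.le
        · show (V t - A) / (B - A) ≤ 1
          rw [div_le_one hBA]; linarith
      · show |(A + (V t - A) / (B - A) * (B - A)) - g t| ≤ δ
        have heq : A + (V t - A) / (B - A) * (B - A) = V t := by field_simp; ring
        rw [heq]; exact h3
  · have hmin : min A B = B := min_eq_right hlt.le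
    have hmax : max A B = A := max_eq_left hlt.le
    obtain ⟨V, hVc, hVm, hVp, hVq, hVpt⟩ := pieceInc hδ hpq (g := fun t => -g t)
      (hg.neg) (by simp [hgp]) (by simp [hgq]) (by linarith : -A ≤ -B)
      (fun t ht => by have := hr2 t ht; rw [hmax] at this; simp; linarith)
      (fun t ht => by have := hr1 t ht; rw [hmin] at this; simp; linarith)
      (fun a ha b hb hab => by have := (hdir a ha b hb hab).2 hlt; simp; linarith)
    have hBA : (0:ℝ) < A - B := by linarith
    refine ⟨fun t => (V t + A) / (A - B), (hVc.add continuousOn_const).div_const _,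
      ?_, ?_, ?_, ?_⟩
    · intro a ha b hb hab
      have h := hVm ha hb hab
      show (V a + A) / (A - B) ≤ (V b + A) / (A - B)
      exact (div_le_div_iff_of_pos_right hBA).mpr (by linarith)
    · show (V p + A) / (A - B) = 0
      rw [hVp]; simp
    · show (V q + A) / (A - B) = 1
      rw [hVq]
      field_simp
      ring
    · intro t ht
      obtain ⟨h1, h2, h3⟩ := hVpt t ht
      constructor
      · constructor
        · exact div_nonneg (by linarith) hBA.le
        · show (V t + A) / (A - B) ≤ 1
          rw [div_le_one hBA]; linarith
      · show |(A + (V t + A) / (A - B) * (B - A)) - g t| ≤ δ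
        have heq : A + (V t + A) / (A - B) * (B - A) = -(V t) := by
          field_simp
          ring
        rw [heq]
        have h4 : |(-(V t)) - g t| = |V t - (-(g t))| := by
          rw [← abs_neg]
          ring_nf
        rw [h4]; exact h3


lemma slack_bound {δ x y z : ℝ} (hδ : 0 ≤ δ)
    (h : z ∈ Set.uIcc x y ∨ z ∈ Set.Icc (x - δ) (x + δ) ∨ z ∈ Set.Icc (y - δ) (y + δ)) :
    min x y - δ ≤ z ∧ z ≤ max x y + δ := by
  rcases h with h | h | h
  · rw [Set.mem_uIcc] at h
    rcases h with ⟨h1, h2⟩ | ⟨h1, h2⟩ <;> constructor <;>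
      linarith [min_le_left x y, min_le_right x y, le_max_left x y, le_max_right x y, hδ]
  · rw [Set.mem_Icc] at h
    constructor <;> linarith [min_le_left x y, le_max_left x y]
  · rw [Set.mem_Icc] at h
    constructor <;> linarith [min_le_right x y, le_max_right x y]
/-- Lemma 3.1: for any `δ ≥ 0`, any curve `τ` and any
`δ`-signature `σ` of `τ` (given by parameters `s` and realized as the linear
interpolation of the values `τ (s i)`), it holds that `d_F(σ, τ) ≤ δ`. -/
theorem frechet_dist_signature_le (δ : ℝ) (hδ : 0 ≤ δ) (τ : ℝ → ℝ)
    (hτ : ContinuousOn τ (Set.Icc 0 1))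
    (ℓ : ℕ) (s : ℕ → ℝ) (hsig : IsSignature δ τ ℓ s)
    (σ : ℝ → ℝ) (hσ : IsPolyOn σ ℓ s (fun i => τ (s i))) :
    frechetDist σ τ ≤ δ := by
  classical
  obtain ⟨hl2, hs0, hslast, hsmono, _hnd, hdirp, hmin2, hmin10, hmin1L,
    hrngI, hrng0, hrngL, hrng2⟩ := hsig
  obtain ⟨-, -, -, -, hinterp⟩ := hσ
  have hsle : ∀ j k : ℕ, j ≤ k → k ≤ ℓ - 1 → s j ≤ s k := by
    intro j k hjk hk
    induction k, hjk using Nat.le_induction with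
    | base => exact le_rfl
    | succ k hjk ih =>
      exact le_trans (ih (by omega)) (hsmono k (by omega)).le
  have hsmem : ∀ k : ℕ, k ≤ ℓ - 1 → s k ∈ Icc (0:ℝ) 1 := by
    intro k hk
    constructor
    · rw [← hs0]; exact hsle 0 k (Nat.zero_le _) hk
    · rw [← hslast]; exact hsle k (ℓ - 1) hk le_rfl
  have hABne : ∀ i, i + 1 < ℓ → τ (s i) ≠ τ (s (i + 1)) := by
    intro i hi he
    have habs : ¬ ((0:ℝ) < |τ (s (i + 1)) - τ (s i)|) := by
      rw [he]; simp
    by_cases h0 : i = 0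
    · subst h0
      exact habs (lt_of_le_of_lt hδ hmin10)
    · by_cases h3 : i + 3 ≤ ℓ
      · exact habs (lt_of_le_of_lt (by linarith) (hmin2 i (by omega) h3))
      · have e1 : ℓ - 1 = i + 1 := by omega
        have e2 : ℓ - 2 = i := by omega
        rw [e1, e2] at hmin1L
        exact habs (lt_of_le_of_lt hδ hmin1L)
  have hrange : ∀ i, i + 1 < ℓ → ∀ t ∈ Icc (s i) (s (i + 1)),
      min (τ (s i)) (τ (s (i + 1))) - δ ≤ τ t ∧
      τ t ≤ max (τ (s i)) (τ (s (i + 1))) + δ := by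
    intro i hi t ht
    by_cases hl2' : ℓ = 2
    · have h0 : i = 0 := by omega
      subst h0
      have h := hrng2 hl2' t ht
      apply slack_bound hδ
      rcases h with (h | h) | h
      · exact Or.inl h
      · exact Or.inr (Or.inl h)
      · exact Or.inr (Or.inr h)
    · by_cases h0 : i = 0
      · subst h0
        have h := hrng0 (by omega) t ht
        apply slack_bound hδ
        rcases h with h | h
        · exact Or.inl h
        · exact Or.inr (Or.inl h)
      · by_cases h3 : i + 3 ≤ ℓ
        · exact slack_bound hδ (Or.inl (hrngI i (by omega) h3 t ht))
        · have e1 : ℓ - 1 = i + 1 := by omega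
          have e2 : ℓ - 2 = i := by omega
          rw [e1, e2] at hrngL
          have h := hrngL (by omega) t ht
          apply slack_bound hδ
          rcases h with h | h
          · exact Or.inl h
          · exact Or.inr (Or.inr h)
  have hdir : ∀ i, i + 1 < ℓ → ∀ a ∈ Icc (s i) (s (i + 1)), ∀ b ∈ Icc (s i) (s (i + 1)),
      a ≤ b → (τ (s i) < τ (s (i + 1)) → τ a - τ b ≤ 2 * δ) ∧
        (τ (s (i + 1)) < τ (s i) → τ b - τ a ≤ 2 * δ) := by
    intro i hi a ha b hb hab
    rcases eq_or_lt_of_le hab with rfl | hlt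
    · constructor <;> intro _ <;> linarith
    · exact hdirp i hi a b ha.1 hlt hb.2
  have hedge : ∀ i, i + 1 < ℓ → ∃ fi : ℝ → ℝ,
      ContinuousOn fi (Icc (s i) (s (i + 1))) ∧ MonotoneOn fi (Icc (s i) (s (i + 1))) ∧
      fi (s i) = s i ∧ fi (s (i + 1)) = s (i + 1) ∧
      ∀ t ∈ Icc (s i) (s (i + 1)), fi t ∈ Icc (s i) (s (i + 1)) ∧ |σ (fi t) - τ t| ≤ δ := by
    intro i hi
    have hpq : s i < s (i + 1) := hsmono i hi
    have hsub : Icc (s i) (s (i + 1)) ⊆ Icc (0:ℝ) 1 :=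
      Icc_subset_Icc (hsmem i (by omega)).1 (hsmem (i + 1) (by omega)).2
    have hgc : ContinuousOn τ (Icc (s i) (s (i + 1))) := hτ.mono hsub
    obtain ⟨R, hRc, hRm, hRp, hRq, hRpt⟩ :=
      pieceR hδ hpq hgc rfl rfl (hABne i hi)
        (fun t ht => (hrange i hi t ht).1) (fun t ht => (hrange i hi t ht).2)
        (hdir i hi)
    refine ⟨fun t => s i + R t * (s (i + 1) - s i),
      continuousOn_const.add (hRc.mul continuousOn_const), ?_, ?_, ?_, ?_⟩
    · intro a ha b hb hab
      have h := hRm ha hb hab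
      have h2 := mul_le_mul_of_nonneg_right h (by linarith : (0:ℝ) ≤ s (i + 1) - s i)
      show s i + R a * (s (i + 1) - s i) ≤ s i + R b * (s (i + 1) - s i)
      linarith
    · show s i + R (s i) * (s (i + 1) - s i) = s i
      rw [hRp]; ring
    · show s i + R (s (i + 1)) * (s (i + 1) - s i) = s (i + 1)
      rw [hRq]; ring
    · intro t ht
      obtain ⟨hR01, hRd⟩ := hRpt t ht
      obtain ⟨hR0, hR1⟩ := hR01
      have hmem : s i + R t * (s (i + 1) - s i) ∈ Icc (s i) (s (i + 1)) := by
        constructor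
        · nlinarith
        · nlinarith
      refine ⟨hmem, ?_⟩
      have hval : σ (s i + R t * (s (i + 1) - s i)) =
          τ (s i) + R t * (τ (s (i + 1)) - τ (s i)) := by
        have h2 := hinterp i hi _ hmem
        simp only at h2
        rw [h2]
        have hne : s (i + 1) - s i ≠ 0 := by linarith
        field_simp
        ring
      rw [hval]
      exact hRd
  have hσedge : ∀ i, i + 1 < ℓ → ContinuousOn σ (Icc (s i) (s (i + 1))) := by
    intro i hi
    have hpq : s i < s (i + 1) := hsmono i hi
    apply ContinuousOn.congr (f := fun u : ℝ =>
      τ (s i) + (u - s i) / (s (i + 1) - s i) * (τ (s (i + 1)) - τ (s i)))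
    · exact (continuous_const.add (((continuous_id.sub continuous_const).div_const _).mul
        continuous_const)).continuousOn
    · intro u hu
      have := hinterp i hi u hu
      simpa using this
  have hσk : ∀ k, 1 ≤ k → k ≤ ℓ - 1 → ContinuousOn σ (Icc (s 0) (s k)) := by
    intro k hk1
    induction k, hk1 using Nat.le_induction with
    | base => intro _; exact hσedge 0 (by omega)
    | succ k hk1 ih =>
      intro hk2
      have h0k : s 0 ≤ s k := hsle 0 k (Nat.zero_le _) (by omega)
      have hkk1 : s k < s (k + 1) := hsmono k (by omega)
      have hun : Icc (s 0) (s (k + 1)) = Icc (s 0) (s k) ∪ Icc (s k) (s (k + 1)) :=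
        (Icc_union_Icc_eq_Icc h0k hkk1.le).symm
      rw [hun]
      exact contOn_union_closed isClosed_Icc isClosed_Icc (ih (by omega))
        (hσedge k (by omega))
  have hσcont : ContinuousOn σ (Icc (0:ℝ) 1) := by
    have h := hσk (ℓ - 1) (by omega) le_rfl
    rwa [hs0, hslast] at h
  have hglue : ∀ k, 1 ≤ k → k ≤ ℓ - 1 → ∃ f : ℝ → ℝ,
      ContinuousOn f (Icc (s 0) (s k)) ∧ MonotoneOn f (Icc (s 0) (s k)) ∧
      f (s 0) = s 0 ∧ f (s k) = s k ∧
      ∀ t ∈ Icc (s 0) (s k), f t ∈ Icc (s 0) (s k) ∧ |σ (f t) - τ t| ≤ δ := by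
    intro k hk1
    induction k, hk1 using Nat.le_induction with
    | base => intro _; exact hedge 0 (by omega)
    | succ k hk1 ih =>
      intro hk2
      obtain ⟨f, hfc, hfm, hfp, hfq, hfpt⟩ := ih (by omega)
      obtain ⟨fk, hkc, hkm, hkp, hkq, hkpt⟩ := hedge k (by omega)
      have h0k : s 0 ≤ s k := hsle 0 k (Nat.zero_le _) (by omega)
      have hkk1 : s k < s (k + 1) := hsmono k (by omega)
      refine ⟨fun t => if t ≤ s k then f t else fk t, ?_, ?_, ?_, ?_, ?_⟩
      · have hun : Icc (s 0) (s (k + 1)) = Icc (s 0) (s k) ∪ Icc (s k) (s (k + 1)) :=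
          (Icc_union_Icc_eq_Icc h0k hkk1.le).symm
        rw [hun]
        apply contOn_union_closed isClosed_Icc isClosed_Icc
        · exact hfc.congr (fun t ht => if_pos ht.2)
        · apply hkc.congr
          intro t ht
          by_cases h : t ≤ s k
          · have he : t = s k := le_antisymm h ht.1
            subst he
            simp only [if_pos le_rfl, hfq, hkp]
          · exact if_neg h
      · intro a ha b hb hab
        by_cases h1 : a ≤ s k <;> by_cases h2 : b ≤ s k
        · simp only [if_pos h1, if_pos h2]
          exact hfm ⟨ha.1, h1⟩ ⟨hb.1, h2⟩ hab
        · simp only [if_pos h1, if_neg h2]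
          push_neg at h2
          have hfa : f a ≤ s k := (hfpt a ⟨ha.1, h1⟩).1.2
          have h3 : fk (s k) ≤ fk b := hkm ⟨le_rfl, hkk1.le⟩ ⟨h2.le, hb.2⟩ h2.le
          rw [hkp] at h3
          linarith
        · exact absurd (hab.trans h2) h1
        · simp only [if_neg h1, if_neg h2]
          push_neg at h1 h2
          exact hkm ⟨h1.le, ha.2⟩ ⟨h2.le, hb.2⟩ hab
      · simp only [if_pos h0k]
        exact hfp
      · simp only [if_neg (not_le.mpr hkk1)]
        exact hkq
      · intro t ht
        by_cases h : t ≤ s k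
        · obtain ⟨hm, hd⟩ := hfpt t ⟨ht.1, h⟩
          simp only [if_pos h]
          exact ⟨⟨hm.1, hm.2.trans hkk1.le⟩, hd⟩
        · push_neg at h
          obtain ⟨hm, hd⟩ := hkpt t ⟨h.le, ht.2⟩
          simp only [if_neg (not_le.mpr h)]
          exact ⟨⟨h0k.trans hm.1, hm.2⟩, hd⟩
  obtain ⟨f0, hf0c, hf0m, hf0p, hf0q, hf0pt⟩ := hglue (ℓ - 1) (by omega) le_rfl
  simp only [hs0, hslast] at hf0c hf0m hf0p hf0q hf0pt
  haveI : Nonempty (Icc (0:ℝ) 1) := ⟨⟨0, by norm_num⟩⟩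
  have main : ∀ ε : ℝ, 0 < ε → frechetDist σ τ ≤ δ + ε := by
    intro ε hε
    have hUC := isCompact_Icc.uniformContinuousOn_of_continuous hσcont
    rw [Metric.uniformContinuousOn_iff] at hUC
    obtain ⟨η, hη, hmod⟩ := hUC ε hε
    set θ : ℝ := min 1 (η / 2) with hθ
    have hθ0 : 0 < θ := lt_min one_pos (by linarith)
    have hθ1 : θ ≤ 1 := min_le_left _ _
    have hθη : θ < η := lt_of_le_of_lt (min_le_right _ _) (by linarith)
    have hFrep : IsReparam (fun t => (1 - θ) * f0 t + θ * t) := by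
      refine ⟨(continuousOn_const.mul hf0c).add
        (continuous_const.mul continuous_id).continuousOn, ?_, ?_, ?_⟩
      · intro a ha b hb hab
        have h1 : f0 a ≤ f0 b := hf0m ha hb hab.le
        have h2 : (1 - θ) * f0 a ≤ (1 - θ) * f0 b :=
          mul_le_mul_of_nonneg_left h1 (by linarith)
        have h3 : θ * a < θ * b := mul_lt_mul_of_pos_left hab hθ0
        show (1 - θ) * f0 a + θ * a < (1 - θ) * f0 b + θ * b
        linarith
      · show (1 - θ) * f0 0 + θ * 0 = 0
        rw [hf0p]; ring
      · show (1 - θ) * f0 1 + θ * 1 = 1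
        rw [hf0q]; ring
    have hbdd : BddBelow (Set.range (fun f : {f : ℝ → ℝ // IsReparam f} =>
        ⨆ t : Icc (0:ℝ) 1, |σ (f.1 ↑t) - τ ↑t|)) := by
      refine ⟨0, ?_⟩
      rintro x ⟨f, rfl⟩
      exact Real.iSup_nonneg (fun t => abs_nonneg _)
    have hle : (⨆ t : Icc (0:ℝ) 1, |σ ((1 - θ) * f0 ↑t + θ * ↑t) - τ ↑t|) ≤ δ + ε := by
      apply ciSup_le
      intro t
      obtain ⟨ht0, ht1⟩ := t.2
      have hmem0 : f0 ↑t ∈ Icc (0:ℝ) 1 := (hf0pt ↑t t.2).1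
      have hd0 : |σ (f0 ↑t) - τ ↑t| ≤ δ := (hf0pt ↑t t.2).2
      obtain ⟨hm0, hm1⟩ := hmem0
      have hmemF : (1 - θ) * f0 ↑t + θ * ↑t ∈ Icc (0:ℝ) 1 := by
        constructor
        · have := mul_nonneg (by linarith : (0:ℝ) ≤ 1 - θ) hm0
          have := mul_nonneg hθ0.le ht0
          linarith
        · have := mul_le_mul_of_nonneg_left hm1 (by linarith : (0:ℝ) ≤ 1 - θ)
          have := mul_le_mul_of_nonneg_left ht1 hθ0.le
          linarith
      have hdistF : dist ((1 - θ) * f0 ↑t + θ * ↑t) (f0 ↑t) < η := by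
        rw [Real.dist_eq]
        have he : (1 - θ) * f0 ↑t + θ * ↑t - f0 ↑t = θ * (↑t - f0 ↑t) := by ring
        rw [he, abs_mul, abs_of_pos hθ0]
        have habs : |(↑t : ℝ) - f0 ↑t| ≤ 1 := by
          rw [abs_le]
          constructor <;> linarith
        nlinarith
      have hσd := hmod _ hmemF _ ⟨hm0, hm1⟩ hdistF
      rw [Real.dist_eq] at hσd
      have htri := abs_sub_le (σ ((1 - θ) * f0 ↑t + θ * ↑t)) (σ (f0 ↑t)) (τ ↑t)
      linarith
    have h1 : frechetDist σ τ ≤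
        ⨆ t : Icc (0:ℝ) 1, |σ ((1 - θ) * f0 ↑t + θ * ↑t) - τ ↑t| :=
      ciInf_le hbdd ⟨fun t => (1 - θ) * f0 t + θ * t, hFrep⟩
    exact h1.trans hle
  by_contra hcon
  push_neg at hcon
  have := main ((frechetDist σ τ - δ) / 2) (by linarith)
  linarith
end

section
/- Let σ with vertices v₁,…,v_ℓ (in order along σ) be a δ-signature of a polygonal curve τ, and let r_i = [v_i − δ, v_i + δ] for 1 ≤ i ≤ ℓ. Then for every polygonal curve π with d_F(τ, π) ≤ δ, there exist parameters 0 ≤ p₁ ≤ p₂ ≤ … ≤ p_ℓ ≤ 1 such that each π(p_i) is a vertex of π (endpoints included) and π(p_i) ∈ r_i for every i; that is, π has a vertex in each range r_i, and these vertices appear along π in the order of i. -/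
open Set

lemma knot_mono {m : ℕ} {t : ℕ → ℝ} (ht : ∀ i, i + 1 < m → t i < t (i + 1)) :
    ∀ i j, i ≤ j → j < m → t i ≤ t j := by
  intro i j hij hj
  induction j with
  | zero => simp_all
  | succ k ih =>
    rcases Nat.lt_or_ge i (k+1) with h | h
    · exact le_trans (ih (Nat.lt_succ_iff.mp h) (by omega)) (le_of_lt (ht k hj))
    · have : i = k + 1 := le_antisymm hij h
      simp [this]

lemma poly_cover {τ : ℝ → ℝ} {m : ℕ} {t w : ℕ → ℝ} (hτ : IsPolyOn τ m t w) :
    ∀ u, 0 ≤ u → u ≤ 1 → ∃ i, i + 1 < m ∧ t i ≤ u ∧ u ≤ t (i + 1) := by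
  obtain ⟨hm, ht0, ht1, htm, hf⟩ := hτ
  intro u hu0 hu1
  have key : ∀ k, 1 ≤ k → k ≤ m - 1 → u ≤ t k → ∃ i, i + 1 ≤ k ∧ t i ≤ u ∧ u ≤ t (i + 1) := by
    intro k
    induction k with
    | zero => omega
    | succ n ih =>
      intro _ hk hu
      rcases Nat.eq_or_lt_of_le (Nat.one_le_iff_ne_zero.mpr (by omega) : 1 ≤ n + 1) with h1 | h1
      · refine ⟨0, by omega, by rw [ht0]; exact hu0, ?_⟩
        have he : (0:ℕ) + 1 = n + 1 := by omega
        rw [he]; exact hu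
      · rcases le_or_gt u (t n) with h | h
        · obtain ⟨i, hi1, hi2, hi3⟩ := ih (by omega) (by omega) h
          exact ⟨i, by omega, hi2, hi3⟩
        · exact ⟨n, le_refl _, le_of_lt h, hu⟩
  obtain ⟨i, hi1, hi2, hi3⟩ := key (m - 1) (by omega) (le_refl _) (by rw [ht1]; exact hu1)
  exact ⟨i, by omega, hi2, hi3⟩

lemma poly_vertex_val {τ : ℝ → ℝ} {m : ℕ} {t w : ℕ → ℝ} (hτ : IsPolyOn τ m t w) :
    ∀ i, i < m → τ (t i) = w i := by
  obtain ⟨hm, ht0, ht1, htm, hf⟩ := hτ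
  intro i hi
  rcases Nat.lt_or_ge (i+1) m with h | h
  · have := hf i h (t i) ⟨le_refl _, le_of_lt (htm i h)⟩
    simp [this]
  · have him : i = m - 1 := by omega
    have h2 : (m - 2) + 1 < m := by omega
    have : i = (m-2) + 1 := by omega
    rw [this]
    have := hf (m-2) h2 (t ((m-2)+1)) ⟨le_of_lt (htm _ h2), le_refl _⟩
    rw [this]
    have hne : t ((m-2)+1) - t (m-2) ≠ 0 := by
      have := htm _ h2; linarith
    field_simp
    ring

lemma poly_neg {π : ℝ → ℝ} {m : ℕ} {t w : ℕ → ℝ} (hπ : IsPolyOn π m t w) :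
    IsPolyOn (fun u => -(π u)) m t (fun j => -(w j)) := by
  obtain ⟨hm, ht0, ht1, htm, hf⟩ := hπ
  refine ⟨hm, ht0, ht1, htm, ?_⟩
  intro i hi u hu
  simp only [hf i hi u hu]
  ring

lemma seg_le {τ : ℝ → ℝ} {m : ℕ} {t w : ℕ → ℝ} (hτ : IsPolyOn τ m t w)
    {i : ℕ} (hi : i + 1 < m) {a b u : ℝ} (ha : t i ≤ a) (hau : a ≤ u) (hub : u ≤ b)
    (hb : b ≤ t (i + 1)) : τ u ≤ max (τ a) (τ b) := by
  obtain ⟨hm, ht0, ht1, htm, hf⟩ := hτ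
  have hΔ : (0:ℝ) < t (i+1) - t i := by have := htm i hi; linarith
  have hfa := hf i hi a ⟨ha, by linarith⟩
  have hfb := hf i hi b ⟨by linarith, hb⟩
  have hfu := hf i hi u ⟨by linarith, by linarith⟩
  rcases le_or_gt (w i) (w (i+1)) with h | h
  · have : τ u ≤ τ b := by
      rw [hfu, hfb]
      have hd : (u - t i) / (t (i+1) - t i) ≤ (b - t i) / (t (i+1) - t i) :=
        div_le_div_of_nonneg_right (by linarith) (le_of_lt hΔ)
      nlinarith
    exact le_trans this (le_max_right _ _)
  · have : τ u ≤ τ a := by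
      rw [hfu, hfa]
      have hd : (a - t i) / (t (i+1) - t i) ≤ (u - t i) / (t (i+1) - t i) :=
        div_le_div_of_nonneg_right (by linarith) (le_of_lt hΔ)
      nlinarith
    exact le_trans this (le_max_left _ _)

lemma poly_bdd {τ : ℝ → ℝ} {m : ℕ} {t w : ℕ → ℝ} (hτ : IsPolyOn τ m t w) :
    ∃ B, ∀ u, 0 ≤ u → u ≤ 1 → |τ u| ≤ B := by
  have hm := hτ.1
  set F := (Finset.range m).image (fun i => |w i|) with hF
  have hFne : F.Nonempty := ⟨|w 0|, Finset.mem_image.mpr ⟨0, Finset.mem_range.mpr (by omega), rfl⟩⟩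
  refine ⟨F.max' hFne, ?_⟩
  intro u hu0 hu1
  obtain ⟨i, hi, hiu, hui⟩ := poly_cover hτ u hu0 hu1
  have hwi : |w i| ≤ F.max' hFne :=
    Finset.le_max' F _ (Finset.mem_image.mpr ⟨i, Finset.mem_range.mpr (Nat.lt_of_succ_lt hi), rfl⟩)
  have hwi1 : |w (i+1)| ≤ F.max' hFne :=
    Finset.le_max' F _ (Finset.mem_image.mpr ⟨i+1, Finset.mem_range.mpr hi, rfl⟩)
  have h1 : τ u ≤ max (τ (t i)) (τ (t (i+1))) := seg_le hτ hi (le_refl _) hiu hui (le_refl _)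
  have h2 : -(τ u) ≤ max (-(τ (t i))) (-(τ (t (i+1)))) :=
    seg_le (poly_neg hτ) hi (le_refl _) hiu hui (le_refl _)
  rw [poly_vertex_val hτ i (by omega), poly_vertex_val hτ (i+1) (by omega)] at h1 h2
  rw [abs_le]
  constructor
  · rcases max_cases (-(w i)) (-(w (i+1))) with ⟨he, _⟩ | ⟨he, _⟩ <;> rw [he] at h2 <;>
      [ (have := neg_abs_le (w i)); (have := neg_abs_le (w (i+1)))] <;> linarith
  · rcases max_cases (w i) (w (i+1)) with ⟨he, _⟩ | ⟨he, _⟩ <;> rw [he] at h1 <;>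
      [ (have := le_abs_self (w i)); (have := le_abs_self (w (i+1)))] <;> linarith

lemma max_at_vertex {π : ℝ → ℝ} {m' : ℕ} {t' w' : ℕ → ℝ} (hπ : IsPolyOn π m' t' w')
    {L R : ℝ} (hLR : L ≤ R) (hL0 : 0 ≤ L) (hR1 : R ≤ 1)
    (HL : (∃ j, j < m' ∧ L = t' j) ∨ ∃ u, L ≤ u ∧ u ≤ R ∧ π L < π u)
    (HR : (∃ j, j < m' ∧ R = t' j) ∨ ∃ u, L ≤ u ∧ u ≤ R ∧ π R < π u) :
    ∃ v, L ≤ v ∧ v ≤ R ∧ (∃ j, j < m' ∧ v = t' j) ∧ ∀ u, L ≤ u → u ≤ R → π u ≤ π v := by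
  classical
  let F : Finset ℝ :=
    insert L (insert R (((Finset.range m').image t').filter (fun x => L ≤ x ∧ x ≤ R)))
  have hLF : L ∈ F := Finset.mem_insert_self _ _
  have hRF : R ∈ F := Finset.mem_insert_of_mem (Finset.mem_insert_self _ _)
  have hvertF : ∀ j, j < m' → L ≤ t' j → t' j ≤ R → t' j ∈ F := by
    intro j hj h1 h2
    refine Finset.mem_insert_of_mem (Finset.mem_insert_of_mem ?_)
    rw [Finset.mem_filter]
    exact ⟨Finset.mem_image.mpr ⟨j, Finset.mem_range.mpr hj, rfl⟩, h1, h2⟩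
  have hFne : F.Nonempty := ⟨L, hLF⟩
  obtain ⟨v, hvF, hvmax⟩ := F.exists_max_image π hFne
  have hdom : ∀ u, L ≤ u → u ≤ R → ∃ x ∈ F, π u ≤ π x := by
    intro u hLu huR
    obtain ⟨i, hi, hiu, hui⟩ := poly_cover hπ u (le_trans hL0 hLu) (le_trans huR hR1)
    have h1 : π u ≤ max (π (max (t' i) L)) (π (min (t' (i+1)) R)) :=
      seg_le hπ hi (le_max_left _ _) (max_le hiu hLu) (le_min hui huR) (min_le_left _ _)
    have haF : max (t' i) L ∈ F := by
      rcases le_total (t' i) L with hc | hc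
      · rw [max_eq_right hc]; exact hLF
      · rw [max_eq_left hc]
        exact hvertF i (Nat.lt_of_succ_lt hi) hc (le_trans hiu huR)
    have hbF : min (t' (i+1)) R ∈ F := by
      rcases le_total (t' (i+1)) R with hc | hc
      · rw [min_eq_left hc]
        exact hvertF (i+1) hi (le_trans hLu hui) hc
      · rw [min_eq_right hc]; exact hRF
    rcases max_cases (π (max (t' i) L)) (π (min (t' (i+1)) R)) with ⟨he, _⟩ | ⟨he, _⟩
    · exact ⟨_, haF, he ▸ h1⟩
    · exact ⟨_, hbF, he ▸ h1⟩
  have hub : ∀ u, L ≤ u → u ≤ R → π u ≤ π v := by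
    intro u h1 h2
    obtain ⟨x, hx, hux⟩ := hdom u h1 h2
    exact le_trans hux (hvmax x hx)
  have hvLR : L ≤ v ∧ v ≤ R := by
    rcases Finset.mem_insert.mp hvF with h | h
    · exact ⟨h.ge, h.le.trans hLR⟩
    rcases Finset.mem_insert.mp h with h | h
    · exact ⟨h ▸ hLR, h.le⟩
    · exact (Finset.mem_filter.mp h).2
  by_cases hvert : ∃ j, j < m' ∧ v = t' j
  · exact ⟨v, hvLR.1, hvLR.2, hvert, hub⟩
  · exfalso
    rcases Finset.mem_insert.mp hvF with h | h
    · rcases HL with hL | ⟨u, hu1, hu2, hu3⟩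
      · exact hvert (h ▸ hL)
      · have h2 := hub u hu1 hu2
        rw [h] at h2; linarith
    rcases Finset.mem_insert.mp h with h | h
    · rcases HR with hR | ⟨u, hu1, hu2, hu3⟩
      · exact hvert (h ▸ hR)
      · have h2 := hub u hu1 hu2
        rw [h] at h2; linarith
    · obtain ⟨hmem, _⟩ := Finset.mem_filter.mp h
      obtain ⟨j, hj, hje⟩ := Finset.mem_image.mp hmem
      exact hvert ⟨j, Finset.mem_range.mp hj, hje.symm⟩

/-- Core step: find a vertex of `ψ` between `pprev` and `qp` whose value is within
`ε'` of the local-maximum value `M`. -/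
lemma step_lemma {ψ : ℝ → ℝ} {m' : ℕ} {t' w' : ℕ → ℝ} (hψ : IsPolyOn ψ m' t' w')
    {φ : ℝ → ℝ} {ε' M : ℝ}
    {qm qc qp pprev : ℝ}
    (h0m : 0 ≤ qm) (hmc : qm ≤ qc) (hcp : qc ≤ qp) (hp1 : qp ≤ 1)
    (hp0 : 0 ≤ pprev) (hpc : pprev ≤ qc)
    (hvp : ∃ j, j < m' ∧ pprev = t' j)
    (hφc : φ qc = M)
    (hub : ∀ u, qm ≤ u → u ≤ qp → φ u ≤ M)
    (hclose : ∀ u, 0 ≤ u → u ≤ 1 → |φ u - ψ u| ≤ ε')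
    (hqm : qm ≤ pprev ∨ ψ qm < M - ε')
    (hqp : (∃ j, j < m' ∧ qp = t' j) ∨ ψ qp < M - ε') :
    ∃ pnew, pprev ≤ pnew ∧ pnew ≤ qp ∧ (∃ j, j < m' ∧ pnew = t' j) ∧
      M - ε' ≤ ψ pnew ∧ ψ pnew ≤ M + ε' := by
  set L := max pprev qm with hL
  have hL0 : 0 ≤ L := le_trans hp0 (le_max_left _ _)
  have hLc : L ≤ qc := max_le hpc hmc
  have hLR : L ≤ qp := le_trans hLc hcp
  have hcc := hclose qc (le_trans hL0 hLc) (le_trans hcp hp1)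
  have hψc : M - ε' ≤ ψ qc := by
    rw [hφc] at hcc
    have := abs_le.mp hcc
    linarith [this.1]
  have HL : (∃ j, j < m' ∧ L = t' j) ∨ ∃ u, L ≤ u ∧ u ≤ qp ∧ ψ L < ψ u := by
    rcases le_total qm pprev with hc | hc
    · left
      obtain ⟨j, hj, hje⟩ := hvp
      exact ⟨j, hj, by rw [hL, max_eq_left hc, hje]⟩
    · rcases hqm with h | h
      · left
        obtain ⟨j, hj, hje⟩ := hvp
        have : qm = pprev := le_antisymm h hc
        exact ⟨j, hj, by rw [hL, this, max_self, hje]⟩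
      · right
        refine ⟨qc, hLc, hcp, ?_⟩
        rw [hL, max_eq_right hc]
        linarith
  have HR : (∃ j, j < m' ∧ qp = t' j) ∨ ∃ u, L ≤ u ∧ u ≤ qp ∧ ψ qp < ψ u := by
    rcases hqp with h | h
    · exact Or.inl h
    · exact Or.inr ⟨qc, hLc, hcp, by linarith⟩
  obtain ⟨v, hv1, hv2, hv3, hv4⟩ := max_at_vertex hψ hLR hL0 hp1 HL HR
  refine ⟨v, le_trans (le_max_left _ _) hv1, hv2, hv3, ?_, ?_⟩
  · exact le_trans hψc (hv4 qc hLc hcp)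
  · have hvm : qm ≤ v := le_trans (le_max_right _ _) hv1
    have hcv := hclose v (le_trans hL0 hv1) (le_trans hv2 hp1)
    have := abs_le.mp hcv
    have := hub v hvm hv2
    linarith [ (abs_le.mp hcv).1 ]

lemma sig_ub {δ : ℝ} {τ : ℝ → ℝ} {ℓ : ℕ} {s : ℕ → ℝ} (hsig : IsSignature δ τ ℓ s)
    (k : ℕ) (hk : k + 3 ≤ ℓ) (hl : τ (s k) < τ (s (k+1))) (hr : τ (s (k+2)) < τ (s (k+1))) :
    ∀ x, s k ≤ x → x ≤ s (k+2) → τ x ≤ τ (s (k+1)) := by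
  obtain ⟨hl2, hs0, hs1e, hsm, hnd, hdir, hedge, he0, he1, hrangeI, hr0, hr1, hr2⟩ := hsig
  intro x hx1 hx2
  rcases le_total x (s (k+1)) with hc | hc
  · -- left segment
    rcases Nat.eq_zero_or_pos k with hk0 | hk1
    · subst hk0
      have h3 : 2 < ℓ := by omega
      have := hr0 h3 x ⟨hx1, hc⟩
      rcases this with h | h
      · rcases Set.mem_uIcc.mp h with ⟨_, h2⟩ | ⟨_, h2⟩
        · exact h2
        · linarith
      · have habs : |τ (s 1) - τ (s 0)| = τ (s 1) - τ (s 0) := abs_of_pos (by linarith)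
        rw [habs] at he0
        have := h.2
        norm_num at this ⊢
        linarith
    · have := hrangeI k hk1 hk x ⟨hx1, hc⟩
      rcases Set.mem_uIcc.mp this with ⟨_, h2⟩ | ⟨_, h2⟩
      · exact h2
      · linarith
  · -- right segment
    rcases Nat.lt_or_ge (k+3) ℓ with hk4 | hk4
    · have := hrangeI (k+1) (by omega) (by omega) x ⟨hc, hx2⟩
      rcases Set.mem_uIcc.mp this with ⟨_, h2⟩ | ⟨_, h2⟩
      · linarith
      · exact h2
    · have hke : ℓ - 2 = k + 1 := by omega
      have hke2 : ℓ - 1 = k + 2 := by omega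
      rw [hke, hke2] at hr1 he1
      have := hr1 (by omega) x ⟨hc, hx2⟩
      rcases this with h | h
      · rcases Set.mem_uIcc.mp h with ⟨_, h2⟩ | ⟨_, h2⟩
        · linarith
        · exact h2
      · have habs : |τ (s (k+2)) - τ (s (k+1))| = τ (s (k+1)) - τ (s (k+2)) := by
          rw [abs_sub_comm]; exact abs_of_pos (by linarith)
        rw [habs] at he1
        have := h.2
        linarith

lemma sig_lb {δ : ℝ} {τ : ℝ → ℝ} {ℓ : ℕ} {s : ℕ → ℝ} (hsig : IsSignature δ τ ℓ s)
    (k : ℕ) (hk : k + 3 ≤ ℓ) (hl : τ (s (k+1)) < τ (s k)) (hr : τ (s (k+1)) < τ (s (k+2))) :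
    ∀ x, s k ≤ x → x ≤ s (k+2) → τ (s (k+1)) ≤ τ x := by
  obtain ⟨hl2, hs0, hs1e, hsm, hnd, hdir, hedge, he0, he1, hrangeI, hr0, hr1, hr2⟩ := hsig
  intro x hx1 hx2
  rcases le_total x (s (k+1)) with hc | hc
  · rcases Nat.eq_zero_or_pos k with hk0 | hk1
    · subst hk0
      have h3 : 2 < ℓ := by omega
      have := hr0 h3 x ⟨hx1, hc⟩
      rcases this with h | h
      · rcases Set.mem_uIcc.mp h with ⟨h1, _⟩ | ⟨h1, _⟩
        · linarith
        · exact h1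
      · have habs : |τ (s 1) - τ (s 0)| = τ (s 0) - τ (s 1) := by
          rw [abs_sub_comm]; exact abs_of_pos (by linarith)
        rw [habs] at he0
        have := h.1
        norm_num at this ⊢
        linarith
    · have := hrangeI k hk1 hk x ⟨hx1, hc⟩
      rcases Set.mem_uIcc.mp this with ⟨h1, _⟩ | ⟨h1, _⟩
      · linarith
      · exact h1
  · rcases Nat.lt_or_ge (k+3) ℓ with hk4 | hk4
    · have := hrangeI (k+1) (by omega) (by omega) x ⟨hc, hx2⟩
      rcases Set.mem_uIcc.mp this with ⟨h1, _⟩ | ⟨h1, _⟩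
      · exact h1
      · linarith
    · have hke : ℓ - 2 = k + 1 := by omega
      have hke2 : ℓ - 1 = k + 2 := by omega
      rw [hke, hke2] at hr1 he1
      have := hr1 (by omega) x ⟨hc, hx2⟩
      rcases this with h | h
      · rcases Set.mem_uIcc.mp h with ⟨h1, _⟩ | ⟨h1, _⟩
        · exact h1
        · linarith
      · have habs : |τ (s (k+2)) - τ (s (k+1))| = τ (s (k+2)) - τ (s (k+1)) :=
          abs_of_pos (by linarith)
        rw [habs] at he1
        have := h.1
        linarith

/-- Lemma 3.2: if `σ` (parameters `s`, vertices `τ (s i)`, all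
vertices of the polygonal curve `τ`) is a `δ`-signature of `τ`, then any polygonal
curve `π` with `d_F(τ, π) ≤ δ` has a vertex in each range
`r i = [τ (s i) - δ, τ (s i) + δ]`, with these vertices appearing along `π` in the
order of `i`. -/
theorem signature_ranges_hit (δ : ℝ) (hδ : 0 ≤ δ)
    (τ : ℝ → ℝ) (m : ℕ) (t w : ℕ → ℝ) (hτ : IsPolyOn τ m t w)
    (ℓ : ℕ) (s : ℕ → ℝ) (hsig : IsSignature δ τ ℓ s)
    (hvert : ∀ i, i < ℓ → ∃ j, j < m ∧ s i = t j)
    (π : ℝ → ℝ) (m' : ℕ) (t' w' : ℕ → ℝ) (hπ : IsPolyOn π m' t' w')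
    (hd : frechetDist τ π ≤ δ) :
    ∃ p : ℕ → ℝ,
      (∀ i, i + 1 < ℓ → p i ≤ p (i + 1)) ∧
      (∀ i, i < ℓ → 0 ≤ p i ∧ p i ≤ 1 ∧ (∃ j, j < m' ∧ p i = t' j) ∧
        π (p i) ∈ Set.Icc (τ (s i) - δ) (τ (s i) + δ)) := by
  classical
  have hsig' := hsig
  obtain ⟨hl2, hs0, hs1e, hsm, hnd, hdir, hedge, he0, he1, hrangeI, hr0, hr1, hr2⟩ := hsig
  have hm'2 : 2 ≤ m' := hπ.1
  have ht'0 : t' 0 = 0 := hπ.2.1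
  have ht'1 : t' (m' - 1) = 1 := hπ.2.2.1
  have h0m : (0:ℝ) ∈ Set.Icc (0:ℝ) 1 := by norm_num
  have h1m : (1:ℝ) ∈ Set.Icc (0:ℝ) 1 := by norm_num
  haveI : Nonempty {f : ℝ → ℝ // IsReparam f} :=
    ⟨⟨id, continuous_id.continuousOn, fun a _ b _ h => h, rfl, rfl⟩⟩
  obtain ⟨Bτ, hBτ⟩ := poly_bdd hτ
  obtain ⟨Bπ, hBπ⟩ := poly_bdd hπ
  have hbdd : ∀ g : {f : ℝ → ℝ // IsReparam f},
      BddAbove (Set.range fun u : Set.Icc (0:ℝ) 1 => |τ (g.1 ↑u) - π ↑u|) := by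
    intro g
    refine ⟨Bτ + Bπ, ?_⟩
    rintro x ⟨u, rfl⟩
    obtain ⟨hg1, hg2, hg3, hg4⟩ := g.2
    have h1 : 0 ≤ g.1 ↑u := by
      have := hg2.monotoneOn h0m u.2 u.2.1; rwa [hg3] at this
    have h2 : g.1 ↑u ≤ 1 := by
      have := hg2.monotoneOn u.2 h1m u.2.2; rwa [hg4] at this
    have hA := hBτ _ h1 h2
    have hB := hBπ u u.2.1 u.2.2
    have key := abs_add_le (τ (g.1 ↑u)) (-(π ↑u))
    rw [abs_neg] at key
    show |τ (g.1 ↑u) - π ↑u| ≤ Bτ + Bπ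
    rw [sub_eq_add_neg]
    have := abs_le.mp hA
    linarith
  -- endpoints matched within δ
  have hend0 : |τ 0 - π 0| ≤ δ := by
    refine le_trans ?_ hd
    unfold frechetDist
    refine le_ciInf ?_
    intro g
    refine le_trans (le_of_eq ?_) (le_ciSup (hbdd g) (⟨0, h0m⟩ : Set.Icc (0:ℝ) 1))
    have hc : ((⟨0, h0m⟩ : Set.Icc (0:ℝ) 1) : ℝ) = 0 := rfl
    rw [hc, g.2.2.2.1]
  have hend1 : |τ 1 - π 1| ≤ δ := by
    refine le_trans ?_ hd
    unfold frechetDist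
    refine le_ciInf ?_
    intro g
    refine le_trans (le_of_eq ?_) (le_ciSup (hbdd g) (⟨1, h1m⟩ : Set.Icc (0:ℝ) 1))
    have hc : ((⟨1, h1m⟩ : Set.Icc (0:ℝ) 1) : ℝ) = 1 := rfl
    rw [hc, g.2.2.2.2]
  -- choice of ε
  set E1 : Finset ℝ := (Finset.Icc 1 (ℓ-3)).image
      (fun k => (|τ (s (k+1)) - τ (s k)| - 2*δ)/2) with hE1
  set E2 : Finset ℝ := (((Finset.range m') ×ˢ (Finset.range ℓ)).image
      (fun ji => |π (t' ji.1) - τ (s ji.2)| - δ)).filter (fun x => 0 < x) with hE2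
  set E : Finset ℝ := insert 1 (E1 ∪ E2) with hE
  have hEne : E.Nonempty := ⟨1, Finset.mem_insert_self _ _⟩
  have hEpos : ∀ x ∈ E, 0 < x := by
    intro x hx
    rcases Finset.mem_insert.mp hx with h | h
    · rw [h]; norm_num
    rcases Finset.mem_union.mp h with h | h
    · rw [hE1] at h
      obtain ⟨k, hk, rfl⟩ := Finset.mem_image.mp h
      rw [Finset.mem_Icc] at hk
      have := hedge k hk.1 (by omega)
      linarith
    · rw [hE2] at h
      exact (Finset.mem_filter.mp h).2
  set ε := E.min' hEne / 2 with hεdef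
  have hminpos := hEpos _ (E.min'_mem hEne)
  have hεpos : 0 < ε := by rw [hεdef]; linarith
  have hεE : ∀ x ∈ E, ε < x := by
    intro x hx
    have h1 := E.min'_le x hx
    rw [hεdef]; linarith
  -- obtain a good reparametrization
  have hlt : frechetDist τ π < δ + ε := lt_of_le_of_lt hd (by linarith)
  unfold frechetDist at hlt
  obtain ⟨g, hgsup⟩ := exists_lt_of_ciInf_lt hlt
  have hfc : ContinuousOn g.1 (Set.Icc 0 1) := g.2.1
  have hfm : StrictMonoOn g.1 (Set.Icc 0 1) := g.2.2.1
  have hf0 : g.1 0 = 0 := g.2.2.2.1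
  have hf1 : g.1 1 = 1 := g.2.2.2.2
  set f := g.1 with hfdef
  have hclose : ∀ u, 0 ≤ u → u ≤ 1 → |τ (f u) - π u| ≤ δ + ε := by
    intro u h1 h2
    exact le_of_lt (lt_of_le_of_lt (le_ciSup (hbdd g) (⟨u, h1, h2⟩ : Set.Icc (0:ℝ) 1)) hgsup)
  have hfmono : ∀ a b, 0 ≤ a → a ≤ b → b ≤ 1 → f a ≤ f b := fun a b h1 h2 h3 =>
    hfm.monotoneOn ⟨h1, le_trans h2 h3⟩ ⟨le_trans h1 h2, h3⟩ h2
  -- s bounds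
  have hsmono := knot_mono hsm
  have hsin : ∀ i, i < ℓ → 0 ≤ s i ∧ s i ≤ 1 := by
    intro i hi
    constructor
    · rw [← hs0]; exact hsmono 0 i (Nat.zero_le _) hi
    · rw [← hs1e]; exact hsmono i (ℓ-1) (by omega) (by omega)
  -- the matched parameters q i
  have hqex : ∀ i, ∃ x, 0 ≤ x ∧ x ≤ 1 ∧ (i < ℓ → f x = s i) := by
    intro i
    rcases Nat.lt_or_ge i ℓ with hi | hi
    · have hmem : s i ∈ Set.Icc (f 0) (f 1) := by
        rw [hf0, hf1]; exact ⟨(hsin i hi).1, (hsin i hi).2⟩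
      obtain ⟨x, hx, hfx⟩ := intermediate_value_Icc zero_le_one hfc hmem
      exact ⟨x, hx.1, hx.2, fun _ => hfx⟩
    · exact ⟨0, le_rfl, zero_le_one, fun h => absurd h (by omega)⟩
  choose q hq0 hq1 hqf using hqex
  have hqmono : ∀ i j, i ≤ j → j < ℓ → q i ≤ q j := by
    intro i j hij hj
    by_contra hcon
    push_neg at hcon
    have h2 := hfm ⟨hq0 j, hq1 j⟩ ⟨hq0 i, hq1 i⟩ hcon
    rw [hqf j hj, hqf i (by omega)] at h2
    exact absurd h2 (not_lt.mpr (hsmono i j hij hj))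
  have hq00 : q 0 = 0 := by
    apply hfm.injOn ⟨hq0 0, hq1 0⟩ h0m
    rw [hqf 0 (by omega), hf0, hs0]
  have hqlast : q (ℓ-1) = 1 := by
    apply hfm.injOn ⟨hq0 _, hq1 _⟩ h1m
    rw [hqf (ℓ-1) (by omega), hf1, hs1e]
  have hπq : ∀ i, i < ℓ → |τ (s i) - π (q i)| ≤ δ + ε := by
    intro i hi
    have h2 := hclose (q i) (hq0 i) (hq1 i)
    rw [hqf i hi] at h2
    exact h2
  -- main induction
  have claim : ∀ k, k ≤ ℓ - 2 → ∃ p : ℕ → ℝ, p 0 = 0 ∧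
      (∀ i, i ≤ k → 0 ≤ p i ∧ p i ≤ q (i+1) ∧ (∃ j, j < m' ∧ p i = t' j) ∧
        |π (p i) - τ (s i)| ≤ δ + ε) ∧
      (∀ i, i + 1 ≤ k → p i ≤ p (i+1)) := by
    intro k
    induction k with
    | zero =>
      intro _
      refine ⟨fun _ => 0, rfl, ?_, fun i hi => absurd hi (by omega)⟩
      intro i hi
      have : i = 0 := by omega
      subst this
      refine ⟨le_rfl, hq0 1, ⟨0, by omega, ht'0.symm⟩, ?_⟩
      show |π 0 - τ (s 0)| ≤ δ + ε
      rw [hs0, abs_sub_comm]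
      linarith [hend0]
    | succ k ih =>
      intro hk1
      obtain ⟨p, hp00, hpi, hpm⟩ := ih (by omega)
      have hkℓ : k + 3 ≤ ℓ := by omega
      have hX := hnd (k+1) (by omega) (by omega)
      have hkk : k + 1 - 1 = k := by omega
      rw [hkk] at hX
      have hne1 : τ (s (k+1)) ≠ τ (s k) := by
        intro he; apply hX; rw [he]; exact Set.left_mem_uIcc
      have hcase : (τ (s k) < τ (s (k+1)) ∧ τ (s (k+2)) < τ (s (k+1))) ∨
          (τ (s (k+1)) < τ (s k) ∧ τ (s (k+1)) < τ (s (k+2))) := by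
        rcases lt_or_ge (τ (s k)) (τ (s (k+1))) with h1 | h1
        · rcases lt_or_ge (τ (s (k+2))) (τ (s (k+1))) with h2 | h2
          · exact Or.inl ⟨h1, h2⟩
          · exact absurd (Set.mem_uIcc.mpr (Or.inl ⟨le_of_lt h1, h2⟩)) hX
        · have h1' : τ (s (k+1)) < τ (s k) := lt_of_le_of_ne h1 hne1
          rcases lt_or_ge (τ (s (k+1))) (τ (s (k+2))) with h2 | h2
          · exact Or.inr ⟨h1', h2⟩
          · exact absurd (Set.mem_uIcc.mpr (Or.inr ⟨h2, h1⟩)) hX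
      have hpk := hpi k le_rfl
      have hq_k1 : q k ≤ q (k+1) := hqmono k (k+1) (by omega) (by omega)
      have hq_k2 : q (k+1) ≤ q (k+2) := hqmono (k+1) (k+2) (by omega) (by omega)
      have hedge_k : 1 ≤ k → 2*δ + 2*ε < |τ (s (k+1)) - τ (s k)| := by
        intro h1k
        have hmem : (|τ (s (k+1)) - τ (s k)| - 2*δ)/2 ∈ E := by
          rw [hE]
          refine Finset.mem_insert_of_mem (Finset.mem_union_left _ ?_)
          rw [hE1]
          exact Finset.mem_image.mpr ⟨k, Finset.mem_Icc.mpr ⟨h1k, by omega⟩, rfl⟩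
        have := hεE _ hmem
        linarith
      have hedge_k1 : k + 4 ≤ ℓ → 2*δ + 2*ε < |τ (s (k+2)) - τ (s (k+1))| := by
        intro h4
        have hmem : (|τ (s (k+2)) - τ (s (k+1))| - 2*δ)/2 ∈ E := by
          rw [hE]
          refine Finset.mem_insert_of_mem (Finset.mem_union_left _ ?_)
          rw [hE1]
          exact Finset.mem_image.mpr ⟨k+1, Finset.mem_Icc.mpr ⟨by omega, by omega⟩, rfl⟩
        have := hεE _ hmem
        linarith
      have hqp_vertex : k + 3 = ℓ → ∃ j, j < m' ∧ q (k+2) = t' j := by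
        intro he
        have hq2 : q (k+2) = 1 := by rw [show k+2 = ℓ-1 by omega]; exact hqlast
        exact ⟨m'-1, by omega, by rw [hq2, ht'1]⟩
      rcases hcase with ⟨hl, hr⟩ | ⟨hl, hr⟩
      · -- local maximum at s (k+1)
        have hub : ∀ u, q k ≤ u → u ≤ q (k+2) → τ (f u) ≤ τ (s (k+1)) := by
          intro u h1 h2
          have hu0 : 0 ≤ u := le_trans (hq0 k) h1
          have hu1 : u ≤ 1 := le_trans h2 (hq1 (k+2))
          have hl1 : s k ≤ f u := by
            rw [← hqf k (by omega)]; exact hfmono (q k) u (hq0 k) h1 hu1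
          have hl2' : f u ≤ s (k+2) := by
            rw [← hqf (k+2) (by omega)]; exact hfmono u (q (k+2)) hu0 h2 (hq1 (k+2))
          exact sig_ub hsig' k hkℓ hl hr (f u) hl1 hl2'
        have hqmA : q k ≤ p k ∨ π (q k) < τ (s (k+1)) - (δ + ε) := by
          rcases Nat.eq_zero_or_pos k with h0 | h1k
          · left; subst h0; rw [hq00, hp00]
          · right
            have h1 := hπq k (by omega)
            have h2 := hedge_k h1k
            rw [abs_of_pos (by linarith : (0:ℝ) < τ (s (k+1)) - τ (s k))] at h2
            have h3 := (abs_le.mp h1).1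
            linarith
        have hqpA : (∃ j, j < m' ∧ q (k+2) = t' j) ∨ π (q (k+2)) < τ (s (k+1)) - (δ + ε) := by
          rcases Nat.lt_or_ge (k+3) ℓ with h4 | h4
          · right
            have h1 := hπq (k+2) (by omega)
            have h2 := hedge_k1 (by omega)
            rw [abs_of_neg (by linarith : τ (s (k+2)) - τ (s (k+1)) < 0)] at h2
            have h3 := (abs_le.mp h1).1
            linarith
          · exact Or.inl (hqp_vertex (by omega))
        obtain ⟨pnew, hn1, hn2, hn3, hn4, hn5⟩ :=
          step_lemma hπ (φ := fun u => τ (f u)) (ε' := δ + ε) (M := τ (s (k+1)))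
            (hq0 k) hq_k1 hq_k2 (hq1 (k+2)) hpk.1 hpk.2.1 hpk.2.2.1
            (congrArg τ (hqf (k+1) (by omega))) hub hclose hqmA hqpA
        refine ⟨Function.update p (k+1) pnew, ?_, ?_, ?_⟩
        · rw [Function.update_of_ne (by omega : (0:ℕ) ≠ k+1)]; exact hp00
        · intro i hi
          rcases Nat.lt_or_ge i (k+1) with hik | hik
          · rw [Function.update_of_ne (by omega : i ≠ k+1)]
            exact hpi i (by omega)
          · have : i = k+1 := by omega
            subst this
            rw [Function.update_self]
            refine ⟨le_trans hpk.1 hn1, hn2, hn3, ?_⟩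
            rw [abs_le]
            constructor <;> linarith
        · intro i hi
          rcases Nat.lt_or_ge (i+1) (k+1) with hik | hik
          · rw [Function.update_of_ne (by omega : i ≠ k+1),
              Function.update_of_ne (by omega : i+1 ≠ k+1)]
            exact hpm i (by omega)
          · have : i = k := by omega
            subst this
            rw [Function.update_of_ne (by omega : i ≠ i+1), Function.update_self]
            exact hn1
      · -- local minimum at s (k+1)
        have hub : ∀ u, q k ≤ u → u ≤ q (k+2) → -(τ (f u)) ≤ -(τ (s (k+1))) := by
          intro u h1 h2
          have hu0 : 0 ≤ u := le_trans (hq0 k) h1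
          have hu1 : u ≤ 1 := le_trans h2 (hq1 (k+2))
          have hl1 : s k ≤ f u := by
            rw [← hqf k (by omega)]; exact hfmono (q k) u (hq0 k) h1 hu1
          have hl2' : f u ≤ s (k+2) := by
            rw [← hqf (k+2) (by omega)]; exact hfmono u (q (k+2)) hu0 h2 (hq1 (k+2))
          have := sig_lb hsig' k hkℓ hl hr (f u) hl1 hl2'
          linarith
        have hφcn : -(τ (f (q (k+1)))) = -(τ (s (k+1))) := by
          rw [hqf (k+1) (by omega)]
        have hclosen : ∀ u, 0 ≤ u → u ≤ 1 → |(-(τ (f u))) - (-(π u))| ≤ δ + ε := by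
          intro u h1 h2
          have h3 := hclose u h1 h2
          have he : -(τ (f u)) - -(π u) = -(τ (f u) - π u) := by ring
          rw [he, abs_neg]; exact h3
        have hqmA : q k ≤ p k ∨ -(π (q k)) < -(τ (s (k+1))) - (δ + ε) := by
          rcases Nat.eq_zero_or_pos k with h0 | h1k
          · left; subst h0; rw [hq00, hp00]
          · right
            have h1 := hπq k (by omega)
            have h2 := hedge_k h1k
            rw [abs_of_neg (by linarith : τ (s (k+1)) - τ (s k) < 0)] at h2
            have h3 := (abs_le.mp h1).2
            linarith
        have hqpA : (∃ j, j < m' ∧ q (k+2) = t' j) ∨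
            -(π (q (k+2))) < -(τ (s (k+1))) - (δ + ε) := by
          rcases Nat.lt_or_ge (k+3) ℓ with h4 | h4
          · right
            have h1 := hπq (k+2) (by omega)
            have h2 := hedge_k1 (by omega)
            rw [abs_of_pos (by linarith : (0:ℝ) < τ (s (k+2)) - τ (s (k+1)))] at h2
            have h3 := (abs_le.mp h1).2
            linarith
          · exact Or.inl (hqp_vertex (by omega))
        obtain ⟨pnew, hn1, hn2, hn3, hn4, hn5⟩ :=
          step_lemma (poly_neg hπ) (φ := fun u => -(τ (f u))) (ε' := δ + ε)
            (M := -(τ (s (k+1))))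
            (hq0 k) hq_k1 hq_k2 (hq1 (k+2)) hpk.1 hpk.2.1 hpk.2.2.1
            hφcn hub hclosen hqmA hqpA
        refine ⟨Function.update p (k+1) pnew, ?_, ?_, ?_⟩
        · rw [Function.update_of_ne (by omega : (0:ℕ) ≠ k+1)]; exact hp00
        · intro i hi
          rcases Nat.lt_or_ge i (k+1) with hik | hik
          · rw [Function.update_of_ne (by omega : i ≠ k+1)]
            exact hpi i (by omega)
          · have : i = k+1 := by omega
            subst this
            rw [Function.update_self]
            refine ⟨le_trans hpk.1 hn1, hn2, hn3, ?_⟩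
            rw [abs_le]
            constructor <;> linarith
        · intro i hi
          rcases Nat.lt_or_ge (i+1) (k+1) with hik | hik
          · rw [Function.update_of_ne (by omega : i ≠ k+1),
              Function.update_of_ne (by omega : i+1 ≠ k+1)]
            exact hpm i (by omega)
          · have : i = k := by omega
            subst this
            rw [Function.update_of_ne (by omega : i ≠ i+1), Function.update_self]
            exact hn1
  -- assemble the final answer
  obtain ⟨p, hp00, hpi, hpm⟩ := claim (ℓ-2) le_rfl
  refine ⟨Function.update p (ℓ-1) 1, ?_, ?_⟩
  · intro i hi
    rcases Nat.lt_or_ge (i+1) (ℓ-1) with h | h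
    · rw [Function.update_of_ne (by omega : i ≠ ℓ-1),
        Function.update_of_ne (by omega : i+1 ≠ ℓ-1)]
      exact hpm i (by omega)
    · have hie : i + 1 = ℓ - 1 := by omega
      rw [Function.update_of_ne (by omega : i ≠ ℓ-1), hie, Function.update_self]
      have h2 := (hpi i (by omega)).2.1
      have h3 : q (i+1) = 1 := by rw [hie]; exact hqlast
      linarith
  · intro i hi
    rcases Nat.lt_or_ge i (ℓ-1) with h | h
    · rw [Function.update_of_ne (by omega : i ≠ ℓ-1)]
      obtain ⟨h1, h2, ⟨j, hj, hje⟩, h4⟩ := hpi i (by omega)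
      refine ⟨h1, le_trans h2 (hq1 (i+1)), ⟨j, hj, hje⟩, ?_⟩
      rw [Set.mem_Icc]
      have hfinal : |π (p i) - τ (s i)| ≤ δ := by
        by_contra hcon
        push_neg at hcon
        have hmem : |π (t' j) - τ (s i)| - δ ∈ E := by
          rw [hE]
          refine Finset.mem_insert_of_mem (Finset.mem_union_right _ ?_)
          rw [hE2, Finset.mem_filter]
          refine ⟨Finset.mem_image.mpr ⟨(j, i), Finset.mem_product.mpr
            ⟨Finset.mem_range.mpr hj, Finset.mem_range.mpr (by omega)⟩, rfl⟩, ?_⟩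
          rw [← hje]; linarith
        have h5 := hεE _ hmem
        rw [← hje] at h5
        linarith
      have h6 := abs_le.mp hfinal
      constructor <;> linarith [h6.1, h6.2]
    · have : i = ℓ-1 := by omega
      subst this
      rw [Function.update_self]
      refine ⟨zero_le_one, le_rfl, ⟨m'-1, by omega, ht'1.symm⟩, ?_⟩
      rw [Set.mem_Icc, hs1e]
      have h6 := abs_le.mp hend1
      constructor <;> linarith [h6.1, h6.2]
end

section
/- Let 0 < λ < 1, let P be a finite set of polygonal curves with vertices in general position, let ℓ ∈ ℕ, and let c ∈ Δ_ℓ be an optimal (1,ℓ)-median of P, i.e., cost₁(P, c) = opt^{(1)}_{1,ℓ}(P). Then for a uniform sample multiset S from P of size at least ⌈5 ln(1/λ)⌉ + 1, Pr[ 12 · opt^{(1)}_{1,ℓ}(S) ≥ min_{τ ∈ P} d_F(τ, c) ] ≥ 1 − λ. -/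
open Set

/-- The `1`-median cost of a center `c` w.r.t. the curves `τ 0, …, τ (n-1)`. -/
noncomputable def cost1 (n : ℕ) (τ : ℕ → ℝ → ℝ) (c : ℝ → ℝ) : ℝ :=
  ∑ i ∈ Finset.range n, frechetDist (τ i) c

/-- The optimal `(1,ℓ)`-median cost of the curves `τ 0, …, τ (n-1)`. -/
noncomputable def opt1 (n : ℕ) (τ : ℕ → ℝ → ℝ) (ℓ : ℕ) : ℝ :=
  sInf {d : ℝ | ∃ c : ℝ → ℝ, InDeltaL ℓ c ∧ d = cost1 n τ c}

section AuxFrechet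

def Bdd01 (τ : ℝ → ℝ) : Prop := ∃ M, ∀ u ∈ Set.Icc (0:ℝ) 1, |τ u| ≤ M

instance : Nonempty {f : ℝ → ℝ // IsReparam f} := ⟨⟨id, isReparam_id⟩⟩

lemma IsReparam.mapsTo {f : ℝ → ℝ} (hf : IsReparam f) :
    Set.MapsTo f (Set.Icc 0 1) (Set.Icc 0 1) := by
  intro x hx
  have h0 : (0:ℝ) ∈ Set.Icc (0:ℝ) 1 := ⟨le_refl 0, zero_le_one⟩
  have h1 : (1:ℝ) ∈ Set.Icc (0:ℝ) 1 := ⟨zero_le_one, le_refl 1⟩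
  constructor
  · rw [← hf.2.2.1]; exact hf.2.1.monotoneOn h0 hx hx.1
  · rw [← hf.2.2.2]; exact hf.2.1.monotoneOn hx h1 hx.2

lemma IsReparam.comp {f g : ℝ → ℝ} (hf : IsReparam f) (hg : IsReparam g) :
    IsReparam (f ∘ g) := by
  refine ⟨hf.1.comp hg.1 hg.mapsTo, ?_, ?_, ?_⟩
  · intro x hx y hy hxy
    exact hf.2.1 (hg.mapsTo hx) (hg.mapsTo hy) (hg.2.1 hx hy hxy)
  · show f (g 0) = 0; rw [hg.2.2.1, hf.2.2.1]
  · show f (g 1) = 1; rw [hg.2.2.2, hf.2.2.2]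

lemma IsReparam.exists_inv {f : ℝ → ℝ} (hf : IsReparam f) :
    ∃ g : ℝ → ℝ, IsReparam g ∧ ∀ t ∈ Set.Icc (0:ℝ) 1, g t ∈ Set.Icc (0:ℝ) 1 ∧ f (g t) = t := by
  have h0 : (0:ℝ) ∈ Set.Icc (0:ℝ) 1 := ⟨le_refl 0, zero_le_one⟩
  have h1 : (1:ℝ) ∈ Set.Icc (0:ℝ) 1 := ⟨zero_le_one, le_refl 1⟩
  set F : Set.Icc (0:ℝ) 1 → Set.Icc (0:ℝ) 1 := fun x => ⟨f ↑x, hf.mapsTo x.2⟩ with hF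
  have hFmono : StrictMono F := fun x y hxy => by
    show f ↑x < f ↑y
    exact hf.2.1 x.2 y.2 hxy
  have hFsurj : Function.Surjective F := by
    intro y
    have : Set.Icc (f 0) (f 1) ⊆ f '' (Set.Icc 0 1) :=
      intermediate_value_Icc zero_le_one hf.1
    have hy : (↑y : ℝ) ∈ Set.Icc (f 0) (f 1) := by
      rw [hf.2.2.1, hf.2.2.2]; exact y.2
    obtain ⟨x, hx, hfx⟩ := this hy
    exact ⟨⟨x, hx⟩, Subtype.ext hfx⟩
  set e := StrictMono.orderIsoOfSurjective F hFmono hFsurj with he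
  set g : ℝ → ℝ := fun y => ↑(e.symm (Set.projIcc 0 1 zero_le_one y)) with hg
  have hginv : ∀ t ∈ Set.Icc (0:ℝ) 1, g t ∈ Set.Icc (0:ℝ) 1 ∧ f (g t) = t := by
    intro t ht
    refine ⟨(e.symm (Set.projIcc 0 1 zero_le_one t)).2, ?_⟩
    have h2 := congrArg Subtype.val (e.apply_symm_apply (Set.projIcc 0 1 zero_le_one t))
    show f ↑(e.symm (Set.projIcc 0 1 zero_le_one t)) = t
    calc f ↑(e.symm (Set.projIcc 0 1 zero_le_one t)) = ↑(Set.projIcc 0 1 zero_le_one t) := h2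
    _ = t := by rw [Set.projIcc_of_mem _ ht]
  refine ⟨g, ⟨?_, ?_, ?_, ?_⟩, hginv⟩
  · have : Continuous g :=
      continuous_subtype_val.comp (e.symm.continuous.comp continuous_projIcc)
    exact this.continuousOn
  · intro x hx y hy hxy
    have : Set.projIcc 0 1 zero_le_one x < Set.projIcc 0 1 zero_le_one y := by
      rw [Set.projIcc_of_mem _ hx, Set.projIcc_of_mem _ hy]
      exact hxy
    exact e.symm.strictMono this
  · have h00 : F ⟨0, h0⟩ = ⟨0, h0⟩ := Subtype.ext hf.2.2.1
    show (↑(e.symm (Set.projIcc 0 1 zero_le_one 0)) : ℝ) = 0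
    rw [Set.projIcc_of_mem _ h0]
    rw [← h00]
    exact congrArg Subtype.val
      (StrictMono.orderIsoOfSurjective_symm_apply_self F hFmono hFsurj ⟨0, h0⟩)
  · have h11 : F ⟨1, h1⟩ = ⟨1, h1⟩ := Subtype.ext hf.2.2.2
    show (↑(e.symm (Set.projIcc 0 1 zero_le_one 1)) : ℝ) = 1
    rw [Set.projIcc_of_mem _ h1]
    rw [← h11]
    exact congrArg Subtype.val
      (StrictMono.orderIsoOfSurjective_symm_apply_self F hFmono hFsurj ⟨1, h1⟩)

lemma frechetDist_nonneg (τ π : ℝ → ℝ) : 0 ≤ frechetDist τ π :=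
  Real.iInf_nonneg fun _ => Real.iSup_nonneg fun _ => abs_nonneg _

lemma bddAbove_aux {τ π f : ℝ → ℝ} (hτ : Bdd01 τ) (hπ : Bdd01 π) (hf : IsReparam f) :
    BddAbove (Set.range fun t : Set.Icc (0:ℝ) 1 => |τ (f ↑t) - π ↑t|) := by
  obtain ⟨M, hM⟩ := hτ; obtain ⟨M', hM'⟩ := hπ
  refine ⟨M + M', ?_⟩
  rintro x ⟨t, rfl⟩
  calc |τ (f ↑t) - π ↑t| ≤ |τ (f ↑t)| + |π ↑t| := abs_sub _ _
  _ ≤ M + M' := add_le_add (hM _ (hf.mapsTo t.2)) (hM' _ t.2)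

lemma frechetDist_le_of_reparam {τ π f : ℝ → ℝ} (hf : IsReparam f) :
    frechetDist τ π ≤ ⨆ t : Set.Icc (0:ℝ) 1, |τ (f ↑t) - π ↑t| :=
  ciInf_le ⟨0, by rintro x ⟨g, rfl⟩; exact Real.iSup_nonneg fun _ => abs_nonneg _⟩
    (⟨f, hf⟩ : {f : ℝ → ℝ // IsReparam f})

lemma frechetDist_symm_le {τ π : ℝ → ℝ} (hτ : Bdd01 τ) (hπ : Bdd01 π) :
    frechetDist π τ ≤ frechetDist τ π := by
  refine le_ciInf fun ⟨f, hf⟩ => ?_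
  obtain ⟨g, hg, hginv⟩ := hf.exists_inv
  refine le_trans (frechetDist_le_of_reparam hg) ?_
  refine Real.iSup_le (fun t => ?_) (Real.iSup_nonneg fun _ => abs_nonneg _)
  obtain ⟨hgt, hfgt⟩ := hginv ↑t t.2
  have heq : |π (g ↑t) - τ ↑t| =
      |τ (f ↑(⟨g ↑t, hgt⟩ : Set.Icc (0:ℝ) 1)) - π ↑(⟨g ↑t, hgt⟩ : Set.Icc (0:ℝ) 1)| := by
    show |π (g ↑t) - τ ↑t| = |τ (f (g ↑t)) - π (g ↑t)|
    rw [hfgt, abs_sub_comm]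
  rw [heq]
  exact le_ciSup (bddAbove_aux hτ hπ hf) (⟨g ↑t, hgt⟩ : Set.Icc (0:ℝ) 1)

lemma frechetDist_symm {τ π : ℝ → ℝ} (hτ : Bdd01 τ) (hπ : Bdd01 π) :
    frechetDist τ π = frechetDist π τ :=
  le_antisymm (frechetDist_symm_le hπ hτ) (frechetDist_symm_le hτ hπ)

lemma frechetDist_triangle {τ ρ π : ℝ → ℝ} (hτ : Bdd01 τ) (hρ : Bdd01 ρ) (hπ : Bdd01 π) :
    frechetDist τ π ≤ frechetDist τ ρ + frechetDist ρ π := by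
  refine le_of_forall_pos_le_add fun ε hε => ?_
  have h1 : frechetDist τ ρ < frechetDist τ ρ + ε / 2 := by linarith
  have h2 : frechetDist ρ π < frechetDist ρ π + ε / 2 := by linarith
  obtain ⟨⟨f, hf⟩, hfS⟩ := exists_lt_of_ciInf_lt h1
  obtain ⟨⟨g, hg⟩, hgS⟩ := exists_lt_of_ciInf_lt h2
  have key : frechetDist τ π ≤
      (⨆ t : Set.Icc (0:ℝ) 1, |τ (f ↑t) - ρ ↑t|) +
        ⨆ t : Set.Icc (0:ℝ) 1, |ρ (g ↑t) - π ↑t| := by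
    refine le_trans (frechetDist_le_of_reparam (hf.comp hg)) ?_
    refine Real.iSup_le (fun t => ?_)
      (add_nonneg (Real.iSup_nonneg fun _ => abs_nonneg _)
        (Real.iSup_nonneg fun _ => abs_nonneg _))
    have hgt : g ↑t ∈ Set.Icc (0:ℝ) 1 := hg.mapsTo t.2
    calc |τ ((f ∘ g) ↑t) - π ↑t|
        ≤ |τ (f (g ↑t)) - ρ (g ↑t)| + |ρ (g ↑t) - π ↑t| := abs_sub_le _ _ _
      _ ≤ (⨆ t : Set.Icc (0:ℝ) 1, |τ (f ↑t) - ρ ↑t|) +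
            ⨆ t : Set.Icc (0:ℝ) 1, |ρ (g ↑t) - π ↑t| :=
          add_le_add (le_ciSup (bddAbove_aux hτ hρ hf) (⟨g ↑t, hgt⟩ : Set.Icc (0:ℝ) 1))
            (le_ciSup (bddAbove_aux hρ hπ hg) t)
  calc frechetDist τ π ≤ _ := key
    _ ≤ (frechetDist τ ρ + ε / 2) + (frechetDist ρ π + ε / 2) := add_le_add hfS.le hgS.le
    _ = frechetDist τ ρ + frechetDist ρ π + ε := by ring

lemma IsPolyOn.exists_piece {τ : ℝ → ℝ} {m : ℕ} {t w : ℕ → ℝ} (h : IsPolyOn τ m t w)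
    {u : ℝ} (hu : u ∈ Set.Icc (0:ℝ) 1) :
    ∃ i, i + 1 < m ∧ u ∈ Set.Icc (t i) (t (i + 1)) := by
  obtain ⟨hm, ht0, ht1, hmono, -⟩ := h
  set P : ℕ → Prop := fun i => t i ≤ u with hP
  have hP0 : P 0 := by rw [hP]; simp only; rw [ht0]; exact hu.1
  set i := Nat.findGreatest P (m - 2) with hi
  have hile : i ≤ m - 2 := Nat.findGreatest_le _
  have him : i + 1 < m := by omega
  have hPi : P i := Nat.findGreatest_spec (Nat.zero_le _) hP0
  refine ⟨i, him, hPi, ?_⟩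
  by_cases hcase : i = m - 2
  · have hmm : i + 1 = m - 1 := by omega
    rw [hmm, ht1]; exact hu.2
  · have hlt : i < m - 2 := lt_of_le_of_ne hile hcase
    have hng := Nat.findGreatest_is_greatest (by omega : i < i + 1) (by omega : i + 1 ≤ m - 2)
    rw [hi] at hng
    exact le_of_not_ge hng

lemma IsPolyOn.bdd01 {τ : ℝ → ℝ} {m : ℕ} {t w : ℕ → ℝ} (h : IsPolyOn τ m t w) : Bdd01 τ := by
  refine ⟨∑ j ∈ Finset.range m, 2 * |w j|, fun u hu => ?_⟩
  obtain ⟨i, him, hui⟩ := h.exists_piece hu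
  have hval := h.2.2.2.2 i him u hui
  have hden : 0 < t (i + 1) - t i := by
    have := h.2.2.2.1 i him; linarith
  have hr0 : 0 ≤ (u - t i) / (t (i + 1) - t i) := div_nonneg (by linarith [hui.1]) hden.le
  have hr1 : (u - t i) / (t (i + 1) - t i) ≤ 1 := by
    rw [div_le_one hden]; linarith [hui.2]
  have hb : |τ u| ≤ 2 * |w i| + 2 * |w (i + 1)| := by
    rw [hval]
    calc |w i + (u - t i) / (t (i + 1) - t i) * (w (i + 1) - w i)|
        ≤ |w i| + |(u - t i) / (t (i + 1) - t i) * (w (i + 1) - w i)| := abs_add_le _ _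
      _ = |w i| + (u - t i) / (t (i + 1) - t i) * |w (i + 1) - w i| := by
          rw [abs_mul, abs_of_nonneg hr0]
      _ ≤ |w i| + 1 * |w (i + 1) - w i| :=
          add_le_add_right (mul_le_mul_of_nonneg_right hr1 (abs_nonneg _)) _
      _ ≤ |w i| + (|w (i + 1)| + |w i|) := by
          rw [one_mul]; exact add_le_add_right (abs_sub _ _) _
      _ ≤ 2 * |w i| + 2 * |w (i + 1)| := by
          have := abs_nonneg (w (i + 1)); linarith
  refine hb.trans ?_
  have hpair : 2 * |w i| + 2 * |w (i + 1)| = ∑ j ∈ {i, i + 1}, 2 * |w j| := by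
    rw [Finset.sum_pair (by omega : i ≠ i + 1)]
  rw [hpair]
  refine Finset.sum_le_sum_of_subset_of_nonneg ?_ (fun j _ _ => by positivity)
  intro j hj
  simp only [Finset.mem_insert, Finset.mem_singleton] at hj
  rcases hj with rfl | rfl <;> simp [Finset.mem_range] <;> omega

lemma InDeltaL.bdd01 {ℓ : ℕ} {c : ℝ → ℝ} (h : InDeltaL ℓ c) : Bdd01 c := by
  obtain ⟨m, t, w, -, hp⟩ := h
  exact hp.bdd01

end AuxFrechet

section AuxCount

lemma geom_count {n : ℕ} (a b : Fin n → ℝ) (Δ D : ℝ) (hΔ : 0 < Δ)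
    (h1 : ∀ i, Δ ≤ a i) (h2 : ∀ i, b i ≤ a i + D) (h3 : ∀ i, D ≤ a i + b i)
    (hsum : ∑ i, a i ≤ ∑ i, b i) :
    ((Finset.univ.filter fun i => b i ≤ Δ / 4).card : ℝ) ≤ 8 / 11 * n := by
  classical
  set G := Finset.univ.filter fun i => b i ≤ Δ / 4 with hG
  set Gc := Finset.univ.filter fun i => ¬ (b i ≤ Δ / 4) with hGc
  have hcards : G.card + Gc.card = n := by
    rw [hG, hGc, Finset.card_filter_add_card_filter_not, Finset.card_univ,
      Fintype.card_fin]
  have hsplit_a : ∑ i ∈ G, a i + ∑ i ∈ Gc, a i = ∑ i, a i :=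
    Finset.sum_filter_add_sum_filter_not _ _ _
  have hsplit_b : ∑ i ∈ G, b i + ∑ i ∈ Gc, b i = ∑ i, b i :=
    Finset.sum_filter_add_sum_filter_not _ _ _
  have hGb : ∑ i ∈ G, b i ≤ (G.card : ℝ) * (Δ / 4) := by
    rw [← nsmul_eq_mul]
    exact Finset.sum_le_card_nsmul _ _ _ fun i hi => (Finset.mem_filter.mp hi).2
  have hdiff : ∑ i ∈ Gc, b i - ∑ i ∈ Gc, a i ≤ (Gc.card : ℝ) * D := by
    rw [← Finset.sum_sub_distrib, ← nsmul_eq_mul]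
    exact Finset.sum_le_card_nsmul _ _ _ fun i _ => by linarith [h2 i]
  have hkey : ∑ i ∈ G, a i ≤ (G.card : ℝ) * (Δ / 4) + (Gc.card : ℝ) * D := by linarith
  have hA1 : (G.card : ℝ) * Δ ≤ ∑ i ∈ G, a i := by
    rw [← nsmul_eq_mul]
    exact Finset.card_nsmul_le_sum _ _ _ fun i _ => h1 i
  have hA2 : (G.card : ℝ) * (D - Δ / 4) ≤ ∑ i ∈ G, a i := by
    rw [← nsmul_eq_mul]
    refine Finset.card_nsmul_le_sum _ _ _ fun i hi => ?_
    have h3i := h3 i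
    have hbi := (Finset.mem_filter.mp hi).2
    linarith
  have hn : (G.card : ℝ) + Gc.card = n := by exact_mod_cast hcards
  have hg0 : (0:ℝ) ≤ G.card := Nat.cast_nonneg _
  have hgc0 : (0:ℝ) ≤ Gc.card := Nat.cast_nonneg _
  show ((G.card : ℝ)) ≤ 8 / 11 * n
  by_cases hD : D ≤ 2 * Δ
  · nlinarith [mul_le_mul_of_nonneg_left hD hgc0]
  · have hD' : 2 * Δ < D := not_le.mp hD
    have hDpos : 0 < D := by linarith
    nlinarith [mul_le_mul_of_nonneg_left hD'.le hg0]

lemma final_count {α : Type*} [Fintype α] (p : α → Prop) [DecidablePred p] (bb : ℝ)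
    (hbad : ((Finset.univ.filter fun x => ¬ p x).card : ℝ) ≤ bb) :
    (Fintype.card α : ℝ) - bb ≤ Nat.card {x // p x} := by
  classical
  rw [Nat.card_eq_fintype_card, Fintype.card_subtype]
  have h := Finset.card_filter_add_card_filter_not (s := (Finset.univ : Finset α)) (p := p)
  rw [Finset.card_univ] at h
  have h' : ((Finset.univ.filter p).card : ℝ) + ((Finset.univ.filter fun x => ¬ p x).card : ℝ)
      = Fintype.card α := by exact_mod_cast h
  linarith

lemma pow_811_le {lam : ℝ} (h0 : 0 < lam) (h1 : lam < 1) {s : ℕ}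
    (hs : ⌈5 * Real.log (1 / lam)⌉₊ + 1 ≤ s) : ((8:ℝ) / 11) ^ (s - 1) ≤ lam := by
  have hinv : 1 < 1 / lam := by rw [lt_div_iff₀ h0]; linarith
  have hL : 0 < Real.log (1 / lam) := Real.log_pos hinv
  have hs1 : (⌈5 * Real.log (1 / lam)⌉₊ : ℝ) ≤ ((s - 1 : ℕ) : ℝ) := by
    exact_mod_cast (by omega : ⌈5 * Real.log (1 / lam)⌉₊ ≤ s - 1)
  have hsl : (5 : ℝ) * Real.log (1 / lam) ≤ ((s - 1 : ℕ) : ℝ) :=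
    le_trans (Nat.le_ceil _) hs1
  have hlog118 : (1:ℝ) / 5 ≤ Real.log (11 / 8) := by
    have hpow5 : ((11:ℝ) / 8) ^ (5:ℕ) = 161051 / 32768 := by norm_num
    have he : Real.exp 1 ≤ ((11:ℝ) / 8) ^ (5:ℕ) := by
      have hd9 := Real.exp_one_lt_d9
      rw [hpow5]; linarith
    have hle := Real.log_le_log (Real.exp_pos 1) he
    rw [Real.log_exp, Real.log_pow] at hle
    push_cast at hle
    linarith
  have hloglam : Real.log (1 / lam) = - Real.log lam := by rw [one_div, Real.log_inv]
  have hmul : (5 * Real.log (1 / lam)) * ((1:ℝ) / 5) ≤ ((s - 1 : ℕ) : ℝ) * Real.log (11 / 8) :=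
    mul_le_mul hsl hlog118 (by norm_num) (Nat.cast_nonneg _)
  have hlogle : Real.log (((8:ℝ) / 11) ^ (s - 1)) ≤ Real.log lam := by
    rw [Real.log_pow]
    have h811 : Real.log ((8:ℝ) / 11) = - Real.log (11 / 8) := by
      rw [show ((8:ℝ)/11) = (11/8)⁻¹ by norm_num, Real.log_inv]
    rw [h811]
    have : Real.log (1 / lam) ≤ ((s - 1 : ℕ) : ℝ) * Real.log (11 / 8) := by linarith
    rw [hloglam] at this
    linarith
  have hpos : (0:ℝ) < ((8:ℝ) / 11) ^ (s - 1) := by positivity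
  exact (Real.log_le_log_iff hpos h0).mp hlogle

end AuxCount

/-- Lemma 5.6: let `c ∈ Δ_ℓ` be an optimal `(1,ℓ)`-median of
`P = {τ 0, …, τ (n-1)}` (curves in general position). For a uniform sample
multiset `S` of size `s ≥ ⌈5 ln(1/λ)⌉ + 1` (with replacement, encoded by
`ι : Fin s → Fin n` uniform) it holds that
`Pr[12·opt^{(1)}_{1,ℓ}(S) ≥ min_{τ ∈ P} d_F(τ, c)] ≥ 1 - λ`. -/
theorem diam_sample (lam : ℝ) (hlam0 : 0 < lam) (hlam1 : lam < 1)
    (n : ℕ) (hn : 0 < n) (τ : ℕ → ℝ → ℝ)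
    (hP : ∀ i, i < n → ∃ m t w, IsPolyOn (τ i) m t w ∧ GenPos m w)
    (ℓ : ℕ) (c : ℝ → ℝ) (hc : InDeltaL ℓ c)
    (hopt : cost1 n τ c = opt1 n τ ℓ)
    (s : ℕ) (hs : ⌈5 * Real.log (1 / lam)⌉₊ + 1 ≤ s) :
    (1 - lam) * ((n : ℝ) ^ s) ≤
      Nat.card {ι : Fin s → Fin n //
        (Finset.range n).inf' (Finset.nonempty_range_iff.mpr hn.ne')
            (fun i => frechetDist (τ i) c) ≤
          12 * sInf {d : ℝ | ∃ c' : ℝ → ℝ, InDeltaL ℓ c' ∧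
              d = ∑ k : Fin s, frechetDist (τ (ι k)) c'}} := by
  classical
  have hs0 : 0 < s := by omega
  haveI : NeZero s := ⟨by omega⟩
  set Δ := (Finset.range n).inf' (Finset.nonempty_range_iff.mpr hn.ne')
      (fun i => frechetDist (τ i) c) with hΔdef
  have core : ∀ p : (Fin s → Fin n) → Prop,
      (∀ ι, p ι ↔ Δ ≤ 12 * sInf {d : ℝ | ∃ c' : ℝ → ℝ, InDeltaL ℓ c' ∧
          d = ∑ k : Fin s, frechetDist (τ ↑(ι k)) c'}) →
      (1 - lam) * ((n : ℝ) ^ s) ≤ Nat.card {ι // p ι} := by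
    intro p hp
    have hcastns : ((n ^ s : ℕ) : ℝ) = (n : ℝ) ^ s := by push_cast; ring
    by_cases hΔpos : 0 < Δ
    · -- main case
      have hbτ : ∀ i : Fin n, Bdd01 (τ ↑i) := fun i => by
        obtain ⟨m, t, w, hp', -⟩ := hP ↑i i.2; exact hp'.bdd01
      have hbc : Bdd01 c := hc.bdd01
      have hoptle : ∀ c' : ℝ → ℝ, InDeltaL ℓ c' →
          ∑ i : Fin n, frechetDist (τ ↑i) c ≤ ∑ i : Fin n, frechetDist (τ ↑i) c' := by
        intro c' hc'
        have h1 : cost1 n τ c ≤ cost1 n τ c' := by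
          rw [hopt]
          refine csInf_le ⟨0, ?_⟩ ⟨c', hc', rfl⟩
          rintro d ⟨c'', -, rfl⟩
          exact Finset.sum_nonneg fun i _ => frechetDist_nonneg _ _
        simp only [cost1] at h1
        have e1 : ∑ i : Fin n, frechetDist (τ ↑i) c
            = ∑ i ∈ Finset.range n, frechetDist (τ i) c :=
          Fin.sum_univ_eq_sum_range (fun i => frechetDist (τ i) c) n
        have e2 : ∑ i : Fin n, frechetDist (τ ↑i) c'
            = ∑ i ∈ Finset.range n, frechetDist (τ i) c' :=
          Fin.sum_univ_eq_sum_range (fun i => frechetDist (τ i) c') n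
        rw [e1, e2]; exact h1
      set B : Fin n → Finset (Fin n) :=
        fun j => Finset.univ.filter fun i => frechetDist (τ ↑i) (τ ↑j) ≤ Δ / 6 with hB
      have hΔle : ∀ i : Fin n, Δ ≤ frechetDist (τ ↑i) c := fun i =>
        Finset.inf'_le _ (Finset.mem_range.mpr i.2)
      have key : ∀ ι : Fin s → Fin n, ¬ p ι →
          (∀ k, ι k ∈ B (ι 0)) ∧ ((B (ι 0)).card : ℝ) ≤ 8 / 11 * n := by
        intro ι hbad
        rw [hp] at hbad
        push_neg at hbad
        have hne : {d : ℝ | ∃ c' : ℝ → ℝ, InDeltaL ℓ c' ∧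
            d = ∑ k : Fin s, frechetDist (τ ↑(ι k)) c'}.Nonempty := ⟨_, c, hc, rfl⟩
        have hqlt : sInf {d : ℝ | ∃ c' : ℝ → ℝ, InDeltaL ℓ c' ∧
            d = ∑ k : Fin s, frechetDist (τ ↑(ι k)) c'} < Δ / 12 := by linarith
        obtain ⟨d, hdmem, hdlt⟩ := exists_lt_of_csInf_lt hne hqlt
        obtain ⟨c', hc', rfl⟩ := hdmem
        have hbc' : Bdd01 c' := hc'.bdd01
        have hbk : ∀ k : Fin s, frechetDist (τ ↑(ι k)) c' < Δ / 12 := by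
          intro k
          have hle := Finset.single_le_sum
            (f := fun k : Fin s => frechetDist (τ ↑(ι k)) c')
            (fun k _ => frechetDist_nonneg _ _) (Finset.mem_univ k)
          linarith
        constructor
        · intro k
          rw [hB]; simp only [Finset.mem_filter, Finset.mem_univ, true_and]
          have t1 : frechetDist (τ ↑(ι k)) (τ ↑(ι 0)) ≤
              frechetDist (τ ↑(ι k)) c' + frechetDist c' (τ ↑(ι 0)) :=
            frechetDist_triangle (hbτ _) hbc' (hbτ _)
          have t2 : frechetDist c' (τ ↑(ι 0)) = frechetDist (τ ↑(ι 0)) c' :=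
            frechetDist_symm hbc' (hbτ _)
          linarith [hbk k, hbk 0]
        · have hsub : B (ι 0) ⊆
              Finset.univ.filter fun i : Fin n => frechetDist (τ ↑i) c' ≤ Δ / 4 := by
            intro i hi
            rw [hB] at hi
            simp only [Finset.mem_filter, Finset.mem_univ, true_and] at hi ⊢
            have t1 : frechetDist (τ ↑i) c' ≤
                frechetDist (τ ↑i) (τ ↑(ι 0)) + frechetDist (τ ↑(ι 0)) c' :=
              frechetDist_triangle (hbτ _) (hbτ _) hbc'
            linarith [hbk 0]
          have hcard : ((Finset.univ.filter fun i : Fin n =>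
              frechetDist (τ ↑i) c' ≤ Δ / 4).card : ℝ) ≤ 8 / 11 * n := by
            refine geom_count (fun i => frechetDist (τ ↑i) c)
              (fun i => frechetDist (τ ↑i) c') Δ (frechetDist c c') hΔpos hΔle
              ?_ ?_ (hoptle c' hc')
            · intro i
              exact frechetDist_triangle (hbτ i) hbc hbc'
            · intro i
              have t1 : frechetDist c c' ≤
                  frechetDist c (τ ↑i) + frechetDist (τ ↑i) c' :=
                frechetDist_triangle hbc (hbτ i) hbc'
              have t2 : frechetDist c (τ ↑i) = frechetDist (τ ↑i) c :=
                frechetDist_symm hbc (hbτ i)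
              linarith
          calc ((B (ι 0)).card : ℝ)
              ≤ ((Finset.univ.filter fun i : Fin n =>
                  frechetDist (τ ↑i) c' ≤ Δ / 4).card : ℝ) := by
                exact_mod_cast Finset.card_le_card hsub
            _ ≤ 8 / 11 * n := hcard
      set J : Finset (Fin n) :=
        Finset.univ.filter (fun j => ((B j).card : ℝ) ≤ 8 / 11 * n) with hJ
      set C : Fin n → Fin s → Finset (Fin n) :=
        fun j k => if k = 0 then {j} else B j with hC
      have hsubset : (Finset.univ.filter fun ι => ¬ p ι) ⊆
          J.biUnion fun j => Fintype.piFinset (C j) := by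
        intro ι hι
        simp only [Finset.mem_filter, Finset.mem_univ, true_and] at hι
        obtain ⟨hmem, hcard⟩ := key ι hι
        refine Finset.mem_biUnion.mpr ⟨ι 0, ?_, ?_⟩
        · rw [hJ]; simp only [Finset.mem_filter, Finset.mem_univ, true_and]; exact hcard
        · rw [Fintype.mem_piFinset]
          intro k
          rw [hC]
          by_cases hk : k = 0
          · subst hk; simp
          · simp only [if_neg hk]; exact hmem k
      have hprodcard : ∀ j : Fin n,
          (Fintype.piFinset (C j)).card = (B j).card ^ (s - 1) := by
        intro j
        have h0 : (C j 0).card = 1 := by rw [hC]; simp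
        have hconst : ∀ k ∈ Finset.univ.erase (0 : Fin s),
            (C j k).card = (B j).card := by
          intro k hk
          rw [hC]; simp only
          rw [if_neg (Finset.ne_of_mem_erase hk)]
        calc (Fintype.piFinset (C j)).card = ∏ k, (C j k).card :=
              Fintype.card_piFinset _
          _ = (∏ k ∈ Finset.univ.erase (0 : Fin s), (C j k).card) * (C j 0).card :=
              (Finset.prod_erase_mul _ _ (Finset.mem_univ _)).symm
          _ = (∏ _k ∈ Finset.univ.erase (0 : Fin s), (B j).card) * 1 := by
              rw [h0, Finset.prod_congr rfl hconst]
          _ = (B j).card ^ (s - 1) := by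
              rw [Finset.prod_const, mul_one,
                Finset.card_erase_of_mem (Finset.mem_univ _), Finset.card_univ,
                Fintype.card_fin]
      have hbadcard : ((Finset.univ.filter fun ι => ¬ p ι).card : ℝ)
          ≤ lam * (n : ℝ) ^ s := by
        have step1 : ((Finset.univ.filter fun ι => ¬ p ι).card : ℝ)
            ≤ ∑ j ∈ J, ((B j).card : ℝ) ^ (s - 1) := by
          have hnat : (Finset.univ.filter fun ι => ¬ p ι).card
              ≤ ∑ j ∈ J, (B j).card ^ (s - 1) := by
            calc (Finset.univ.filter fun ι => ¬ p ι).card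
                ≤ (J.biUnion fun j => Fintype.piFinset (C j)).card :=
                  Finset.card_le_card hsubset
              _ ≤ ∑ j ∈ J, (Fintype.piFinset (C j)).card := Finset.card_biUnion_le
              _ = ∑ j ∈ J, (B j).card ^ (s - 1) :=
                  Finset.sum_congr rfl fun j _ => hprodcard j
          exact_mod_cast hnat
        have step2 : ∑ j ∈ J, ((B j).card : ℝ) ^ (s - 1)
            ≤ (n : ℝ) * (8 / 11 * n) ^ (s - 1) := by
          have hterm : ∀ j ∈ J, ((B j).card : ℝ) ^ (s - 1) ≤ (8 / 11 * n) ^ (s - 1) := by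
            intro j hj
            rw [hJ] at hj
            simp only [Finset.mem_filter, Finset.mem_univ, true_and] at hj
            exact pow_le_pow_left₀ (Nat.cast_nonneg _) hj _
          have hJn : (J.card : ℝ) ≤ n := by
            have := Finset.card_le_card (Finset.subset_univ J)
            rw [Finset.card_univ, Fintype.card_fin] at this
            exact_mod_cast this
          have hpnn : (0:ℝ) ≤ (8 / 11 * (n:ℝ)) ^ (s - 1) := by positivity
          calc ∑ j ∈ J, ((B j).card : ℝ) ^ (s - 1)
              ≤ ∑ _j ∈ J, ((8:ℝ) / 11 * n) ^ (s - 1) := Finset.sum_le_sum hterm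
            _ = (J.card : ℝ) * ((8:ℝ) / 11 * n) ^ (s - 1) := by
                rw [Finset.sum_const, nsmul_eq_mul]
            _ ≤ (n : ℝ) * (8 / 11 * n) ^ (s - 1) :=
                mul_le_mul_of_nonneg_right hJn hpnn
        have step3 : (n : ℝ) * (8 / 11 * (n:ℝ)) ^ (s - 1)
            = ((8:ℝ) / 11) ^ (s - 1) * (n : ℝ) ^ s := by
          calc (n : ℝ) * (8 / 11 * (n:ℝ)) ^ (s - 1)
              = ((8:ℝ) / 11) ^ (s - 1) * ((n : ℝ) ^ (s - 1) * n) := by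
                rw [mul_pow]; ring
            _ = ((8:ℝ) / 11) ^ (s - 1) * (n : ℝ) ^ s := by
                rw [← pow_succ, show s - 1 + 1 = s by omega]
        have hpow := pow_811_le hlam0 hlam1 hs
        have hnn : (0:ℝ) ≤ (n : ℝ) ^ s := by positivity
        calc ((Finset.univ.filter fun ι => ¬ p ι).card : ℝ)
            ≤ (n : ℝ) * (8 / 11 * (n:ℝ)) ^ (s - 1) := step1.trans step2
          _ = ((8:ℝ) / 11) ^ (s - 1) * (n : ℝ) ^ s := step3
          _ ≤ lam * (n : ℝ) ^ s := mul_le_mul_of_nonneg_right hpow hnn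
      have hfinal := final_count p (lam * (n : ℝ) ^ s) hbadcard
      rw [Fintype.card_fun, Fintype.card_fin, Fintype.card_fin, hcastns] at hfinal
      have hgoal : (1 - lam) * ((n : ℝ) ^ s) = (n : ℝ) ^ s - lam * (n : ℝ) ^ s := by ring
      rw [hgoal]
      exact hfinal
    · -- Δ ≤ 0 : event always holds
      have hall : ∀ ι, p ι := by
        intro ι
        rw [hp]
        have hnn : 0 ≤ sInf {d : ℝ | ∃ c' : ℝ → ℝ, InDeltaL ℓ c' ∧
            d = ∑ k : Fin s, frechetDist (τ ↑(ι k)) c'} := by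
          refine Real.sInf_nonneg fun d hd => ?_
          obtain ⟨c', -, rfl⟩ := hd
          exact Finset.sum_nonneg fun k _ => frechetDist_nonneg _ _
        push_neg at hΔpos
        linarith
      have hcardeq : Nat.card {ι // p ι} = Nat.card (Fin s → Fin n) :=
        Nat.card_congr (Equiv.subtypeUnivEquiv hall)
      rw [hcardeq, Nat.card_eq_fintype_card, Fintype.card_fun, Fintype.card_fin,
        Fintype.card_fin, hcastns]
      have hnn : (0:ℝ) ≤ (n : ℝ) ^ s := by positivity
      nlinarith
  exact core _ fun ι => Iff.rfl
end
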